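/- arXiv:math/0611012 — 3 statements merged into one kernel-verified Lean document; each statement's English description precedes it below -/
import Mathlib

section
/- For every s ≥ k ≥ 0, the coefficient of x^{s-k} in the Maclaurin expansion of (1/√(1−4x))·((1−√(1−4x))/(2x))^{k−1} equals C(2s−k, s−k) − C(2s−k−1, s−k−1), where C(·,·) denotes binomial coefficients. -/
open PowerSeries

/-- `f(x) = 1/√(1−4x) = Σ C(2n,n) xⁿ`, the generating function of central
binomial coefficients. -/
noncomputable def f : PowerSeries ℚ := PowerSeries.mk fun n => (Nat.choose (2 * n) n : ℚ)

/-- `g(x) = (1−√(1−4x))/(2x) = Σ Cₙ xⁿ`, the generating function of Catalan numbers. -/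
noncomputable def g : PowerSeries ℚ := PowerSeries.mk fun n => (catalan n : ℚ)

lemma g_eq : g = 1 + X * g ^ 2 := by
  ext n
  cases n with
  | zero => simp [g]
  | succ n =>
    rw [map_add, coeff_succ_X_mul, sq, coeff_mul]
    simp [g, catalan_succ' n, coeff_one]

lemma key (n : ℕ) : ∀ m, (coeff (R := ℚ) n) (f * g ^ m) = ((2 * n + m).choose n : ℚ) := by
  induction n with
  | zero =>
    intro m
    rw [coeff_zero_eq_constantCoeff, map_mul, map_pow]
    simp [f, g, constantCoeff_mk]
  | succ n ih =>
    intro m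
    induction m with
    | zero => simp [f]
    | succ m ihm =>
      have h1 : f * g ^ (m + 1) = f * g ^ m * (1 + X * g ^ 2) := by
        rw [pow_succ, mul_assoc]
        exact congrArg (fun t => f * (g ^ m * t)) g_eq
      have h2 : f * g ^ (m + 1) = f * g ^ m + X * (f * g ^ (m + 2)) := by
        rw [h1]; ring
      rw [h2, map_add, coeff_succ_X_mul, ihm, ih]
      have h3 : (2 * (n + 1) + (m + 1)).choose (n + 1) =
          (2 * (n + 1) + m).choose (n + 1) + (2 * n + (m + 2)).choose n := by
        rw [show 2 * (n + 1) + (m + 1) = (2 * n + m + 2) + 1 by ring,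
          show 2 * (n + 1) + m = 2 * n + m + 2 by ring,
          show 2 * n + (m + 2) = 2 * n + m + 2 by ring,
          Nat.choose_succ_succ]
        ring
      rw [h3]
      push_cast
      ring

/-- For `s ≥ k ≥ 1`, the coefficient of `x^{s−k}` in `f(x)·g(x)^{k−1}` equals
`C(2s−k, s−k) − C(2s−k−1, s−k−1)`.  (Here the subtracted term is written in the
symmetric form `C(2s−k−1, s)`, which also encodes the convention `C(·,−1) = 0`
in the case `s = k`.) -/
theorem stmt4 (s k : ℕ) (hk : 1 ≤ k) (hks : k ≤ s) :
    PowerSeries.coeff (R := ℚ) (s - k) (f * g ^ (k - 1)) =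
      (Nat.choose (2 * s - k) (s - k) : ℚ) - (Nat.choose (2 * s - k - 1) s : ℚ) := by
  obtain ⟨j, rfl⟩ : ∃ j, k = j + 1 := ⟨k - 1, by omega⟩
  obtain ⟨t, rfl⟩ : ∃ t, s = t + j + 1 := ⟨s - j - 1, by omega⟩
  rw [show (t + j + 1) - (j + 1) = t by omega, show (j + 1) - 1 = j by omega, key t j,
    show 2 * (t + j + 1) - (j + 1) = 2 * t + j + 1 by omega,
    show 2 * t + j + 1 - 1 = 2 * t + j by omega]
  have h : (2 * t + j + 1).choose t = (2 * t + j).choose t + (2 * t + j).choose (t + j + 1) := by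
    cases t with
    | zero => simp [Nat.choose_eq_zero_of_lt]
    | succ t' =>
      have hsym : (2 * (t' + 1) + j).choose t' = (2 * (t' + 1) + j).choose (t' + 1 + j + 1) := by
        rw [show t' + 1 + j + 1 = (2 * (t' + 1) + j) - t' by omega, Nat.choose_symm (by omega)]
      rw [show 2 * (t' + 1) + j + 1 = (2 * (t' + 1) + j) + 1 by ring,
        Nat.choose_succ_succ, hsym]
      ring
  rw [h]
  push_cast
  ring
end

section
/- Let R = ℤ[X_1,…,X_n] and let R₁ be the ideal generated by: X_i² for all i; X_I = Π_{i∈I} X_i for all subsets I of {1,…,n} with |I| = (n−m)/2 + 1; and e_k(I) = Σ_{J⊆I, |J|=k} X_J for all subsets I and integers k with k + |I| = n + 1. Then the quotient ring R/R₁ is a free ℤ-module of rank C(n, (n−m)/2), where n ≡ m (mod 2) and 0 ≤ m ≤ n. -/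
open MvPolynomial

/-- The de Concini–Procesi ideal `R₁ ⊆ ℤ[X_1,…,X_n]`: generated by the `X_i²`,
the squarefree monomials `X_I` with `|I| = (n−m)/2 + 1`, and the elementary
symmetric sums `e_k(I) = Σ_{J⊆I, |J|=k} X_J` with `k + |I| = n + 1`. -/
noncomputable def springerIdeal (n m : ℕ) : Ideal (MvPolynomial (Fin n) ℤ) :=
  Ideal.span
    ({p | ∃ i : Fin n, p = X i ^ 2} ∪
     {p | ∃ I : Finset (Fin n), I.card = (n - m) / 2 + 1 ∧ p = ∏ i ∈ I, X i} ∪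
     {p | ∃ (I : Finset (Fin n)) (k : ℕ), k + I.card = n + 1 ∧
        p = ∑ J ∈ I.powersetCard k, ∏ i ∈ J, X i})

open Finset
namespace SpringerAux
variable {n : ℕ}



noncomputable def ind (S : Finset (Fin n)) : Fin n →₀ ℕ := ∑ i ∈ S, Finsupp.single i 1

lemma ind_apply (S : Finset (Fin n)) (i : Fin n) :
    ind S i = if i ∈ S then 1 else 0 := by
  classical
  simp only [ind, Finsupp.finset_sum_apply, Finsupp.single_apply]
  rw [Finset.sum_ite_eq' S i (fun _ => 1)]

lemma ind_le_one (S : Finset (Fin n)) (i : Fin n) : ind S i ≤ 1 := by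
  rw [ind_apply]; split <;> simp

lemma ind_inj {S T : Finset (Fin n)} (h : ind S = ind T) : S = T := by
  ext i
  have := congrArg (fun f => f i) h
  simp only [ind_apply] at this
  by_cases hS : i ∈ S <;> by_cases hT : i ∈ T <;> simp [hS, hT] at this ⊢

lemma ind_add_of_disjoint {S T : Finset (Fin n)} (h : Disjoint S T) :
    ind S + ind T = ind (S ∪ T) := by
  rw [ind, ind, ind, ← Finset.sum_union h]

lemma prod_X_eq (S : Finset (Fin n)) :
    (∏ i ∈ S, (X i : MvPolynomial (Fin n) ℤ)) = monomial (ind S) 1 := by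
  classical
  induction S using Finset.induction_on with
  | empty => simp [ind]
  | @insert a s ha ih =>
    rw [Finset.prod_insert ha, ih, ind, ind, Finset.sum_insert ha, X, monomial_mul, one_mul]

lemma ind_add_eq_iff {T J S : Finset (Fin n)} :
    ind T + ind J = ind S ↔ (Disjoint T J ∧ T ∪ J = S) := by
  constructor
  · intro h
    have hd : Disjoint T J := by
      rw [Finset.disjoint_left]
      intro x hxT hxJ
      have := congrArg (fun f => f x) h
      simp only [Finsupp.add_apply, ind_apply, if_pos hxT, if_pos hxJ] at this
      split at this <;> omega
    rw [ind_add_of_disjoint hd] at h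
    exact ⟨hd, ind_inj h⟩
  · rintro ⟨hd, rfl⟩
    exact ind_add_of_disjoint hd

section Pairing
variable (B : Finset (Fin n)) (pa : Fin n → Fin n)

/-- the squarefree set selected by `K ⊆ B`: elements of `K` replaced by partners -/
def SK (K : Finset (Fin n)) : Finset (Fin n) := K.image pa ∪ (B \ K)

noncomputable def fB : MvPolynomial (Fin n) ℤ →ₗ[ℤ] ℤ :=
  ∑ K ∈ B.powerset, ((-1:ℤ))^K.card • (lcoeff ℤ (ind (SK B pa K)))

lemma fB_apply (p : MvPolynomial (Fin n) ℤ) :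
    fB B pa p = ∑ K ∈ B.powerset, (-1:ℤ)^K.card * coeff (ind (SK B pa K)) p := by
  simp [fB, smul_eq_mul]

variable {B pa}
variable (hout : ∀ b ∈ B, pa b ∉ B)

include hout in
lemma SK_card {K : Finset (Fin n)} (hinj : Set.InjOn pa ↑B) (hK : K ⊆ B) :
    (SK B pa K).card = B.card := by
  rw [SK, Finset.card_union_of_disjoint, Finset.card_image_of_injOn
      (hinj.mono (by exact_mod_cast hK)), Finset.card_sdiff_of_subset hK]
  · have := Finset.card_le_card hK; omega
  · rw [Finset.disjoint_left]
    rintro x hx1 hx2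
    obtain ⟨b, hb, rfl⟩ := Finset.mem_image.1 hx1
    exact hout b (hK hb) (Finset.mem_sdiff.1 hx2).1

lemma fB_monomial (α : Fin n →₀ ℕ) (c : ℤ) :
    fB B pa (monomial α c)
      = ∑ K ∈ B.powerset, (-1:ℤ)^K.card * (if α = ind (SK B pa K) then c else 0) := by
  rw [fB_apply]
  congr 1
  ext K
  rw [coeff_monomial]

def wt (S : Finset (Fin n)) : ℕ := ∑ x ∈ S, x.val

lemma fB_mul_sq_zero (i : Fin n) (g : MvPolynomial (Fin n) ℤ) :
    fB B pa (X i ^ 2 * g) = 0 := by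
  rw [fB_apply]
  apply Finset.sum_eq_zero
  intro K _
  rw [X_pow_eq_monomial, coeff_monomial_mul']
  rw [if_neg, mul_zero]
  intro hle
  have h1 := Finsupp.single_le_iff.1 hle
  have h2 := ind_le_one (SK B pa K) i
  omega

include hout in
lemma fB_mul_prod_zero (hinj : Set.InjOn pa ↑B) {I : Finset (Fin n)}
    (hIB : B.card < I.card) (g : MvPolynomial (Fin n) ℤ) :
    fB B pa ((∏ i ∈ I, X i) * g) = 0 := by
  rw [fB_apply]
  apply Finset.sum_eq_zero
  intro K hK
  rw [prod_X_eq, coeff_monomial_mul']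
  rw [if_neg, mul_zero]
  intro hle
  have hsub : I ⊆ SK B pa K := by
    intro x hx
    have := hle x
    rw [ind_apply, ind_apply, if_pos hx] at this
    split at this
    · assumption
    · omega
  have := Finset.card_le_card hsub
  rw [SK_card hout hinj (Finset.mem_powerset.1 hK)] at this
  omega

lemma fB_sqmon (S : Finset (Fin n)) :
    fB B pa (monomial (ind S) 1)
      = ∑ K ∈ B.powerset, (-1:ℤ)^K.card * (if SK B pa K = S then 1 else 0) := by
  rw [fB_monomial]
  apply Finset.sum_congr rfl
  intro K _
  congr 1
  by_cases h : SK B pa K = S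
  · rw [if_pos h, if_pos (by rw [h])]
  · rw [if_neg h, if_neg (fun he => h (ind_inj he.symm))]

lemma SK_empty : SK B pa ∅ = B := by simp [SK]

include hout in
lemma SK_eq_B_iff {K : Finset (Fin n)} (hK : K ⊆ B) : SK B pa K = B ↔ K = ∅ := by
  constructor
  · intro h
    rw [Finset.eq_empty_iff_forall_notMem]
    intro b hb
    have : pa b ∈ SK B pa K := Finset.mem_union_left _ (Finset.mem_image_of_mem pa hb)
    rw [h] at this
    exact hout b (hK hb) this
  · rintro rfl; exact SK_empty

include hout in
lemma fB_diag : fB B pa (monomial (ind B) 1) = 1 := by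
  rw [fB_sqmon]
  rw [Finset.sum_eq_single ∅]
  · simp [SK_empty]
  · intro K hK hKne
    rw [if_neg, mul_zero]
    intro h
    exact hKne ((SK_eq_B_iff hout (Finset.mem_powerset.1 hK)).1 h)
  · intro h
    exact absurd (Finset.empty_mem_powerset B) h

include hout in
lemma fB_offdiag (hinj : Set.InjOn pa ↑B) (hlt : ∀ b ∈ B, pa b < b)
    {S : Finset (Fin n)} (hne : S ≠ B)
    (hnz : fB B pa (monomial (ind S) 1) ≠ 0) : wt S < wt B := by
  rw [fB_sqmon] at hnz
  have hex : ∃ K ∈ B.powerset, SK B pa K = S := by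
    by_contra hno
    push_neg at hno
    apply hnz
    apply Finset.sum_eq_zero
    intro K hK
    rw [if_neg (hno K hK), mul_zero]
  obtain ⟨K, hK, rfl⟩ := hex
  rw [Finset.mem_powerset] at hK
  have hKne : K ≠ ∅ := fun h => hne (h ▸ SK_empty)
  have hdisj : Disjoint (K.image pa) (B \ K) := by
    rw [Finset.disjoint_left]
    rintro x hx1 hx2
    obtain ⟨b, hb, rfl⟩ := Finset.mem_image.1 hx1
    exact hout b (hK hb) (Finset.mem_sdiff.1 hx2).1
  rw [wt, SK, Finset.sum_union hdisj,
      Finset.sum_image (fun x hx y hy h => hinj (hK hx) (hK hy) h)]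
  have h1 : ∑ b ∈ K, (pa b).val < ∑ b ∈ K, b.val := by
    apply Finset.sum_lt_sum_of_nonempty (Finset.nonempty_of_ne_empty hKne)
    intro b hb
    exact hlt b (hK hb)
  have h2 : ∑ b ∈ B \ K, b.val + ∑ b ∈ K, b.val = wt B := Finset.sum_sdiff hK
  rw [wt] at h2 ⊢
  omega

include hout in
lemma sign_sum_zero (hinj : Set.InjOn pa ↑B) {T I₀ : Finset (Fin n)} {k : ℕ}
    (hk : k + I₀.card = n + 1) :
    ∑ K ∈ B.powerset, (-1:ℤ)^K.card *
      (if T ⊆ SK B pa K ∧ SK B pa K \ T ∈ I₀.powersetCard k then 1 else 0) = 0 := by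
  classical
  by_cases hex : ∃ K₀, K₀ ⊆ B ∧ T ⊆ SK B pa K₀ ∧ SK B pa K₀ \ T ∈ I₀.powersetCard k
  case neg =>
    apply Finset.sum_eq_zero
    intro K hK
    rw [if_neg, mul_zero]
    rintro ⟨h1, h2⟩
    exact hex ⟨K, Finset.mem_powerset.1 hK, h1, h2⟩
  case pos =>
  obtain ⟨K₀, hK₀, hT₀, hpc₀⟩ := hex
  obtain ⟨hsub₀, hcard₀⟩ := Finset.mem_powersetCard.1 hpc₀
  have hIn : I₀.card ≤ n := by
    have := Finset.card_le_univ I₀; simpa using this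
  have hk1 : 1 ≤ k := by omega
  have hSKc : (SK B pa K₀).card = B.card := SK_card hout hinj hK₀
  have hTc : T.card + k = B.card := by
    have h1 : (SK B pa K₀ \ T).card = (SK B pa K₀).card - T.card := Finset.card_sdiff_of_subset hT₀
    have h2 := Finset.card_le_card hT₀
    omega
  set Bad : Finset (Fin n) := T ∪ I₀ᶜ with hBadDef
  have hBadc : Bad.card ≤ T.card + (k - 1) := by
    have h1 := Finset.card_union_le T I₀ᶜ
    rw [← hBadDef] at h1
    have h2 : I₀ᶜ.card = n - I₀.card := by
      rw [Finset.card_compl]; simp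
    omega
  have hbex : ∃ b ∈ B, pa b ∉ Bad ∧ b ∉ Bad := by
    by_contra hno
    push_neg at hno
    have hmem : ∀ b ∈ B, (if pa b ∈ Bad then pa b else b) ∈ Bad := by
      intro b hb
      split
      · assumption
      · exact hno b hb (by assumption)
    have hinjOn : Set.InjOn (fun b => if pa b ∈ Bad then pa b else b) ↑B := by
      intro x hx y hy h
      simp only [Finset.mem_coe] at hx hy
      by_cases hx' : pa x ∈ Bad <;> by_cases hy' : pa y ∈ Bad <;>
        simp only [hx', hy', if_pos, if_neg, if_true, if_false] at h
      · exact hinj hx hy h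
      · exact absurd hy (h ▸ hout x hx)
      · exact absurd hx (by rw [h]; exact hout y hy)
      · exact h
    have hcard := Finset.card_le_card_of_injOn _ hmem hinjOn
    omega
  obtain ⟨b0, hb0B, hpb0, hb0⟩ := hbex
  have hb0T : b0 ∉ T := fun h => hb0 (Finset.mem_union_left _ h)
  have hb0I : b0 ∈ I₀ := by
    by_contra h; exact hb0 (Finset.mem_union_right _ (Finset.mem_compl.2 h))
  have hpb0T : pa b0 ∉ T := fun h => hpb0 (Finset.mem_union_left _ h)
  have hpb0I : pa b0 ∈ I₀ := by
    by_contra h; exact hpb0 (Finset.mem_union_right _ (Finset.mem_compl.2 h))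
  have hpb0B : pa b0 ∉ B := hout b0 hb0B
  -- replace the condition by the subset form
  have hchi : ∀ K ⊆ B, ((T ⊆ SK B pa K ∧ SK B pa K \ T ∈ I₀.powersetCard k)
      ↔ (T ⊆ SK B pa K ∧ SK B pa K ⊆ T ∪ I₀)) := by
    intro K hK
    constructor
    · rintro ⟨h1, h2⟩
      obtain ⟨hs, -⟩ := Finset.mem_powersetCard.1 h2
      refine ⟨h1, ?_⟩
      intro x hx
      by_cases hxT : x ∈ T
      · exact Finset.mem_union_left _ hxT
      · exact Finset.mem_union_right _ (hs (Finset.mem_sdiff.2 ⟨hx, hxT⟩))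
    · rintro ⟨h1, h2⟩
      refine ⟨h1, Finset.mem_powersetCard.2 ⟨?_, ?_⟩⟩
      · intro x hx
        obtain ⟨hx1, hx2⟩ := Finset.mem_sdiff.1 hx
        rcases Finset.mem_union.1 (h2 hx1) with h | h
        · exact absurd h hx2
        · exact h
      · rw [Finset.card_sdiff_of_subset h1, SK_card hout hinj hK]
        have := Finset.card_le_card h1
        rw [SK_card hout hinj hK] at this
        omega
  rw [Finset.sum_congr rfl (fun K hK => by
    rw [if_congr (hchi K (Finset.mem_powerset.1 hK)) rfl rfl])]
  -- membership transfer away from the toggled pair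
  have hprune : ∀ K, b0 ∉ K → ∀ x, x ≠ b0 → x ≠ pa b0 →
      (x ∈ SK B pa (insert b0 K) ↔ x ∈ SK B pa K) := by
    intro K hbK x hx1 hx2
    simp only [SK, Finset.mem_union, Finset.mem_image, Finset.mem_sdiff, Finset.mem_insert]
    constructor
    · rintro (⟨a, ha, rfl⟩ | ⟨h1, h2⟩)
      · rcases ha with rfl | ha
        · exact absurd rfl hx2
        · exact Or.inl ⟨a, ha, rfl⟩
      · exact Or.inr ⟨h1, fun h => h2 (Or.inr h)⟩
    · rintro (⟨a, ha, rfl⟩ | ⟨h1, h2⟩)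
      · exact Or.inl ⟨a, Or.inr ha, rfl⟩
      · refine Or.inr ⟨h1, ?_⟩
        rintro (rfl | h)
        · exact hx1 rfl
        · exact h2 h
  have hcond : ∀ K, b0 ∉ K →
      ((T ⊆ SK B pa K ∧ SK B pa K ⊆ T ∪ I₀)
        ↔ (T ⊆ SK B pa (insert b0 K) ∧ SK B pa (insert b0 K) ⊆ T ∪ I₀)) := by
    intro K hbK
    have hT : T ⊆ SK B pa K ↔ T ⊆ SK B pa (insert b0 K) := by
      constructor <;> intro h x hx
      · exact (hprune K hbK x (fun he => hb0T (he ▸ hx)) (fun he => hpb0T (he ▸ hx))).2 (h hx)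
      · exact (hprune K hbK x (fun he => hb0T (he ▸ hx)) (fun he => hpb0T (he ▸ hx))).1 (h hx)
    have hS : (SK B pa K ⊆ T ∪ I₀) ↔ (SK B pa (insert b0 K) ⊆ T ∪ I₀) := by
      constructor <;> intro h x hx
      · by_cases h1 : x = b0
        · exact h1 ▸ Finset.mem_union_right _ hb0I
        by_cases h2 : x = pa b0
        · exact h2 ▸ Finset.mem_union_right _ hpb0I
        · exact h ((hprune K hbK x h1 h2).1 hx)
      · by_cases h1 : x = b0
        · exact h1 ▸ Finset.mem_union_right _ hb0I
        by_cases h2 : x = pa b0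
        · exact h2 ▸ Finset.mem_union_right _ hpb0I
        · exact h ((hprune K hbK x h1 h2).2 hx)
    exact and_congr hT hS
  -- the involution
  apply Finset.sum_involution
    (g := fun K _ => if b0 ∈ K then K.erase b0 else insert b0 K)
  · intro K hK
    by_cases hb : b0 ∈ K
    · simp only [if_pos hb]
      have hbK' : b0 ∉ K.erase b0 := Finset.notMem_erase b0 K
      have hKi : insert b0 (K.erase b0) = K := Finset.insert_erase hb
      have hiff := hcond (K.erase b0) hbK'
      rw [hKi] at hiff
      have hcc : K.card = (K.erase b0).card + 1 := by
        rw [Finset.card_erase_of_mem hb]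
        have := Finset.card_pos.2 ⟨b0, hb⟩
        omega
      rw [if_congr hiff.symm rfl rfl, hcc, pow_succ]
      ring
    · simp only [if_neg hb]
      have hiff := hcond K hb
      have hcc : (insert b0 K).card = K.card + 1 := Finset.card_insert_of_notMem hb
      rw [if_congr hiff rfl rfl, hcc, pow_succ]
      ring
  · intro K hK hne
    by_cases hb : b0 ∈ K
    · simp only [if_pos hb]
      intro he
      exact (he ▸ Finset.notMem_erase b0 K) hb
    · simp only [if_neg hb]
      intro he
      exact hb (he ▸ Finset.mem_insert_self b0 K)
  · intro K hK
    by_cases hb : b0 ∈ K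
    · simp only [if_pos hb]
      rw [if_neg (Finset.notMem_erase b0 K)]
      exact Finset.insert_erase hb
    · simp only [if_neg hb]
      rw [if_pos (Finset.mem_insert_self b0 K)]
      exact Finset.erase_insert hb
  · intro K hK
    by_cases hb : b0 ∈ K
    · simp only [if_pos hb]
      exact Finset.mem_powerset.2 ((Finset.erase_subset b0 K).trans (Finset.mem_powerset.1 hK))
    · simp only [if_neg hb]
      exact Finset.mem_powerset.2 (Finset.insert_subset hb0B (Finset.mem_powerset.1 hK))

include hout in
lemma fB_mul_sigma_zero (hinj : Set.InjOn pa ↑B) {k : ℕ} {I₀ : Finset (Fin n)}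
    (hk : k + I₀.card = n + 1) (g : MvPolynomial (Fin n) ℤ) :
    fB B pa (g * ∑ J ∈ I₀.powersetCard k, ∏ i ∈ J, X i) = 0 := by
  induction g using MvPolynomial.induction_on' with
  | add p q hp hq => rw [add_mul, map_add, hp, hq, add_zero]
  | monomial α c =>
    have hmc : (monomial α c : MvPolynomial (Fin n) ℤ) = c • monomial α 1 := by
      rw [smul_monomial, smul_eq_mul, mul_one]
    rw [hmc, smul_mul_assoc, map_smul, smul_eq_mul]
    suffices h : fB B pa ((monomial α 1 : MvPolynomial (Fin n) ℤ)
        * ∑ J ∈ I₀.powersetCard k, ∏ i ∈ J, X i) = 0 by rw [h, mul_zero]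
    by_cases hsq : ∀ i, α i ≤ 1
    · have hα : α = ind α.support := by
        ext i
        rw [ind_apply]
        by_cases h : i ∈ α.support
        · rw [if_pos h]
          have h1 := Finsupp.mem_support_iff.1 h
          have h2 := hsq i
          omega
        · rw [if_neg h]; exact Finsupp.notMem_support_iff.1 h
      set T := α.support with hT
      rw [hα, Finset.mul_sum, map_sum]
      have hterm : ∀ J ∈ I₀.powersetCard k,
          fB B pa ((monomial (ind T) 1 : MvPolynomial (Fin n) ℤ) * ∏ i ∈ J, X i)
            = ∑ K ∈ B.powerset, (-1:ℤ)^K.card *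
               (if T ⊆ SK B pa K ∧ J = SK B pa K \ T then 1 else 0) := by
        intro J hJ
        rw [prod_X_eq, monomial_mul, one_mul, fB_monomial]
        apply Finset.sum_congr rfl
        intro K hK
        congr 1
        by_cases hc : T ⊆ SK B pa K ∧ J = SK B pa K \ T
        · rw [if_pos hc, if_pos]
          obtain ⟨h1, rfl⟩ := hc
          rw [ind_add_eq_iff]
          exact ⟨Finset.disjoint_sdiff, Finset.union_sdiff_of_subset h1⟩
        · rw [if_neg hc, if_neg]
          intro he
          obtain ⟨hd, hu⟩ := ind_add_eq_iff.1 he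
          refine hc ⟨?_, ?_⟩
          · rw [← hu]; exact Finset.subset_union_left
          · rw [← hu, Finset.union_sdiff_cancel_left hd]
      rw [Finset.sum_congr rfl hterm, Finset.sum_comm]
      have hKsum : ∀ K ∈ B.powerset,
          (∑ J ∈ I₀.powersetCard k, (-1:ℤ)^K.card *
            (if T ⊆ SK B pa K ∧ J = SK B pa K \ T then 1 else 0))
            = (-1:ℤ)^K.card *
              (if T ⊆ SK B pa K ∧ SK B pa K \ T ∈ I₀.powersetCard k then 1 else 0) := by
        intro K hK
        rw [← Finset.mul_sum]
        congr 1
        by_cases h1 : T ⊆ SK B pa K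
        · simp only [h1, true_and]
          rw [Finset.sum_ite_eq' (I₀.powersetCard k) (SK B pa K \ T) (fun _ => (1:ℤ))]
        · simp only [h1, false_and, if_false, Finset.sum_const_zero]
      rw [Finset.sum_congr rfl hKsum]
      exact sign_sum_zero hout hinj hk
    · push_neg at hsq
      obtain ⟨i, hi⟩ := hsq
      rw [Finset.mul_sum, map_sum]
      apply Finset.sum_eq_zero
      intro J hJ
      rw [prod_X_eq, monomial_mul, one_mul, fB_monomial]
      apply Finset.sum_eq_zero
      intro K hK
      rw [if_neg, mul_zero]
      intro he
      have h3 := congrArg (fun f => f i) he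
      simp only [Finsupp.add_apply] at h3
      have h2 := ind_le_one (SK B pa K) i
      omega

end Pairing



/-- weight used for the measure in straightening: small elements dominate -/
def mu (n : ℕ) (S : Finset (Fin n)) : ℕ := ∑ x ∈ S, 2 ^ (n - 1 - x.val)


lemma sum_two_pow_lt {F : Finset ℕ} {c : ℕ} (h : ∀ x ∈ F, x < c) :
    ∑ x ∈ F, 2 ^ x < 2 ^ c := by
  calc ∑ x ∈ F, 2 ^ x ≤ ∑ x ∈ Finset.range c, 2 ^ x := by
        apply Finset.sum_le_sum_of_subset
        intro x hx; exact Finset.mem_range.2 (h x hx)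
    _ < 2 ^ c := by
        rw [Nat.geomSum_eq le_rfl]
        have : 0 < 2 ^ c := Nat.pow_pos (by norm_num)
        omega

lemma mu_lt_of_above {F : Finset (Fin n)} {e : Fin n} (h : ∀ x ∈ F, e < x) :
    mu n F < 2 ^ (n - 1 - e.val) := by
  have hinj : Set.InjOn (fun x : Fin n => n - 1 - x.val) F := by
    intro x hx y hy hxy
    simp only at hxy
    have hx' := x.isLt; have hy' := y.isLt
    exact Fin.ext (by omega)
  rw [mu, ← Finset.sum_image (f := fun x => (2:ℕ) ^ x) hinj]
  apply sum_two_pow_lt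
  intro y hy
  simp only [Finset.mem_image] at hy
  obtain ⟨x, hx, rfl⟩ := hy
  have := h x hx
  have hx' := x.isLt
  have : e.val < x.val := this
  omega

lemma mu_union_eq {S T : Finset (Fin n)} (h : Disjoint S T) :
    mu n (S ∪ T) = mu n S + mu n T := by
  rw [mu, mu, mu, Finset.sum_union h]

/-- key strict decrease of mu -/
lemma mu_strict {J J0 : Finset (Fin n)} {e : Fin n} (he : e ∈ J0) (heJ : e ∉ J)
    (hJ : ∀ x ∈ J \ J0, e < x) : mu n J < mu n J0 := by
  have h1 : mu n J = mu n (J \ J0) + mu n (J ∩ J0) := by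
    rw [← mu_union_eq (Finset.disjoint_sdiff_inter J J0), Finset.sdiff_union_inter]
  have h2 : mu n (insert e (J0 ∩ J)) ≤ mu n J0 := by
    apply Finset.sum_le_sum_of_subset
    intro x hx
    rcases Finset.mem_insert.1 hx with rfl | hx
    · exact he
    · exact (Finset.mem_inter.1 hx).1
  have h3 : mu n (insert e (J0 ∩ J)) = 2 ^ (n - 1 - e.val) + mu n (J0 ∩ J) := by
    rw [mu, Finset.sum_insert (by simp [heJ]), mu]
  have h4 := mu_lt_of_above hJ
  rw [h1, Finset.inter_comm]
  omega



/-- admissible subsets of `range n` (ℕ-version, for counting) -/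
def AdmN (n d : ℕ) : Finset (Finset ℕ) :=
  (Finset.range n).powerset.filter
    (fun S => S.card ≤ d ∧ ∀ m < n, 2 * (S.filter (· ≤ m)).card ≤ m + 1)

lemma mem_AdmN {n d : ℕ} {S : Finset ℕ} :
    S ∈ AdmN n d ↔ S ⊆ Finset.range n ∧ S.card ≤ d ∧
      ∀ m < n, 2 * (S.filter (· ≤ m)).card ≤ m + 1 := by
  simp [AdmN, and_assoc]

lemma AdmN_zero_eq (n : ℕ) : AdmN n 0 = {∅} := by
  ext S
  simp only [mem_AdmN, Finset.mem_singleton, Nat.le_zero, Finset.card_eq_zero]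
  constructor
  · rintro ⟨-, h, -⟩; exact h
  · rintro rfl; exact ⟨by simp, rfl, by intro m hm; simp⟩

lemma AdmN_collapse {n d : ℕ} (h : 2 * d = n + 1) : AdmN n d = AdmN n (d - 1) := by
  ext S
  simp only [mem_AdmN]
  constructor
  · rintro ⟨hsub, hcard, hcond⟩
    refine ⟨hsub, ?_, hcond⟩
    have hn1 : 1 ≤ n := by omega
    have := hcond (n-1) (by omega)
    have hfe : S.filter (· ≤ n - 1) = S := by
      apply Finset.filter_true_of_mem
      intro x hx
      have := Finset.mem_range.1 (hsub hx); omega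
    rw [hfe] at this; omega
  · rintro ⟨hsub, hcard, hcond⟩; exact ⟨hsub, by omega, hcond⟩

lemma AdmN_rec {n d : ℕ} (hd0 : 1 ≤ d) (hd : 2 * d ≤ n + 1) :
    (AdmN (n+1) d).card = (AdmN n d).card + (AdmN n (d-1)).card := by
  have hsplit : (AdmN (n+1) d).card =
      ((AdmN (n+1) d).filter (fun S => n ∈ S)).card +
      ((AdmN (n+1) d).filter (fun S => n ∉ S)).card := by
    rw [Finset.card_filter_add_card_filter_not]
  have hnotin : (AdmN (n+1) d).filter (fun S => n ∉ S) = AdmN n d := by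
    ext S
    simp only [Finset.mem_filter, mem_AdmN]
    constructor
    · rintro ⟨⟨hsub, hcard, hcond⟩, hn⟩
      refine ⟨?_, hcard, fun m hm => hcond m (by omega)⟩
      intro x hx
      have hx1 := Finset.mem_range.1 (hsub hx)
      have hxn : x ≠ n := fun h => hn (h ▸ hx)
      exact Finset.mem_range.2 (by omega)
    · rintro ⟨hsub, hcard, hcond⟩
      have hn : n ∉ S := fun h => by simpa using Finset.mem_range.1 (hsub h)
      refine ⟨⟨fun x hx => ?_, hcard, fun m hm => ?_⟩, hn⟩
      · exact Finset.mem_range.2 (Nat.lt_succ_of_lt (Finset.mem_range.1 (hsub hx)))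
      · by_cases hmn : m < n
        · exact hcond m hmn
        · have hmn' : m = n := by omega
          subst hmn'
          have hfe : S.filter (· ≤ m) = S := by
            apply Finset.filter_true_of_mem
            intro x hx; exact Nat.le_of_lt (Finset.mem_range.1 (hsub hx))
          rw [hfe]; omega
  have hin : ((AdmN (n+1) d).filter (fun S => n ∈ S)).card = (AdmN n (d-1)).card := by
    apply Finset.card_bij (fun S _ => S.erase n)
    · rintro S hS
      simp only [Finset.mem_filter, mem_AdmN] at hS
      obtain ⟨⟨hsub, hcard, hcond⟩, hn⟩ := hS
      rw [mem_AdmN]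
      refine ⟨?_, ?_, ?_⟩
      · intro x hx
        obtain ⟨hxn, hxS⟩ := Finset.mem_erase.1 hx
        have := Finset.mem_range.1 (hsub hxS); exact Finset.mem_range.2 (by omega)
      · have := Finset.card_erase_of_mem hn; omega
      · intro m hm
        have heq : (S.erase n).filter (· ≤ m) = S.filter (· ≤ m) := by
          ext x
          simp only [Finset.mem_filter, Finset.mem_erase]
          constructor
          · rintro ⟨⟨-, h⟩, h2⟩; exact ⟨h, h2⟩
          · rintro ⟨h, h2⟩; exact ⟨⟨by omega, h⟩, h2⟩
        rw [heq]; exact hcond m (by omega)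
    · intro S hS T hT h
      simp only [Finset.mem_filter] at hS hT
      have := congrArg (insert n) h
      rwa [Finset.insert_erase hS.2, Finset.insert_erase hT.2] at this
    · intro T hT
      rw [mem_AdmN] at hT
      obtain ⟨hsub, hcard, hcond⟩ := hT
      have hn : n ∉ T := fun h => by simpa using Finset.mem_range.1 (hsub h)
      refine ⟨insert n T, ?_, by rw [Finset.erase_insert hn]⟩
      simp only [Finset.mem_filter, mem_AdmN]
      have hcards : (insert n T).card = T.card + 1 := Finset.card_insert_of_notMem hn
      refine ⟨⟨?_, by omega, ?_⟩, Finset.mem_insert_self n T⟩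
      · intro x hx
        rcases Finset.mem_insert.1 hx with rfl | hx
        · exact Finset.self_mem_range_succ x
        · exact Finset.mem_range.2 (Nat.lt_succ_of_lt (Finset.mem_range.1 (hsub hx)))
      · intro m hm
        by_cases hmn : m < n
        · have heq : (insert n T).filter (· ≤ m) = T.filter (· ≤ m) := by
            ext x
            simp only [Finset.mem_filter, Finset.mem_insert]
            constructor
            · rintro ⟨h1, h2⟩
              rcases h1 with h1 | h1
              · subst h1; omega
              · exact ⟨h1, h2⟩
            · rintro ⟨hx, h2⟩; exact ⟨Or.inr hx, h2⟩
          rw [heq]; exact hcond m hmn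
        · have hmn' : m = n := by omega
          subst hmn'
          have heq : (insert m T).filter (· ≤ m) = insert m T := by
            apply Finset.filter_true_of_mem
            intro x hx
            rcases Finset.mem_insert.1 hx with rfl | hx
            · exact le_rfl
            · exact Nat.le_of_lt (Finset.mem_range.1 (hsub hx))
          rw [heq, Finset.card_insert_of_notMem hn]; omega
  rw [hsplit, hnotin, hin]; omega

lemma AdmN_card : ∀ n d : ℕ, 2 * d ≤ n + 1 → (AdmN n d).card = n.choose d := by
  intro n
  induction n with
  | zero =>
    intro d hd
    have : d = 0 := by omega
    subst this
    rw [AdmN_zero_eq]; simp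
  | succ n ih =>
    intro d hd
    rcases Nat.eq_zero_or_pos d with rfl | hd0
    · rw [AdmN_zero_eq]; simp
    obtain ⟨d', rfl⟩ : ∃ d', d = d' + 1 := ⟨d - 1, by omega⟩
    by_cases hcase : 2 * (d' + 1) ≤ n + 1
    · rw [AdmN_rec (by omega) (by omega)]
      simp only [Nat.add_sub_cancel]
      rw [ih (d'+1) hcase, ih d' (by omega), Nat.choose_succ_succ']
      omega
    · -- boundary : 2(d'+1) = n + 2
      have h2d : 2 * (d' + 1) = n + 2 := by omega
      rw [AdmN_collapse (by omega : 2 * (d'+1) = (n+1) + 1)]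
      simp only [Nat.add_sub_cancel]
      rcases Nat.eq_zero_or_pos d' with rfl | hd1
      · rw [AdmN_zero_eq]
        have : n = 0 := by omega
        subst this; simp
      · obtain ⟨d'', rfl⟩ : ∃ d'', d' = d'' + 1 := ⟨d' - 1, by omega⟩
        rw [AdmN_rec (by omega) (by omega)]
        simp only [Nat.add_sub_cancel]
        rw [ih (d''+1) (by omega), ih d'' (by omega)]
        have h1 : n.choose d'' + n.choose (d''+1) = (n+1).choose (d''+1) :=
          (Nat.choose_succ_succ' n d'').symm
        have hsymm := Nat.choose_symm (show d''+1+1 ≤ n+1 by omega) (n := n+1)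
        have he : n + 1 - (d'' + 1 + 1) = d'' + 1 := by omega
        rw [he] at hsymm
        omega

/-- admissible subsets of `Fin n` with at most `d` elements -/
def Adm (n d : ℕ) : Finset (Finset (Fin n)) :=
  Finset.univ.filter
    (fun S => S.card ≤ d ∧ ∀ t : Fin n, 2 * (S.filter (· ≤ t)).card ≤ t.val + 1)

lemma mem_Adm {d : ℕ} {S : Finset (Fin n)} :
    S ∈ Adm n d ↔ S.card ≤ d ∧ ∀ t : Fin n, 2 * (S.filter (· ≤ t)).card ≤ t.val + 1 := by
  simp [Adm]

lemma Adm_card_eq (d : ℕ) : (Adm n d).card = (AdmN n d).card := by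
  apply Finset.card_bij (fun S _ => S.map Fin.valEmbedding)
  · intro S hS
    rw [mem_Adm] at hS
    rw [mem_AdmN]
    refine ⟨?_, by simpa using hS.1, ?_⟩
    · intro x hx
      simp only [Finset.mem_map, Fin.valEmbedding_apply] at hx
      obtain ⟨y, -, rfl⟩ := hx
      exact Finset.mem_range.2 y.isLt
    · intro m hm
      have := hS.2 ⟨m, hm⟩
      rw [Finset.filter_map]
      rw [Finset.card_map]
      convert this using 3
      ext x; simp [Fin.le_iff_val_le_val]
  · intro S hS T hT h
    exact Finset.map_injective _ h
  · intro S' hS'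
    rw [mem_AdmN] at hS'
    have hlt : ∀ x ∈ S', x < n := fun x hx => Finset.mem_range.1 (hS'.1 hx)
    refine ⟨S'.attachFin hlt, ?_, ?_⟩
    · rw [mem_Adm]
      have hmap : (S'.attachFin hlt).map Fin.valEmbedding = S' := by
        ext x
        simp only [Finset.mem_map, Fin.valEmbedding_apply]
        constructor
        · rintro ⟨y, hy, rfl⟩; exact (Finset.mem_attachFin hlt).1 hy
        · intro hx; exact ⟨⟨x, hlt x hx⟩, (Finset.mem_attachFin hlt).2 hx, rfl⟩
      constructor
      · rw [Finset.card_attachFin]; exact hS'.2.1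
      · intro t
        have := hS'.2.2 t.val t.isLt
        rw [← hmap, Finset.filter_map, Finset.card_map] at this
        convert this using 3
        exact Finset.filter_congr (fun x _ => Iff.rfl)
    · ext x
      simp only [Finset.mem_map, Fin.valEmbedding_apply]
      constructor
      · rintro ⟨y, hy, rfl⟩; exact (Finset.mem_attachFin hlt).1 hy
      · intro hx; exact ⟨⟨x, hlt x hx⟩, (Finset.mem_attachFin hlt).2 hx, rfl⟩

/-- a pairing below an admissible set -/
lemma exists_pairing {d : ℕ} {B : Finset (Fin n)} (hB : B ∈ Adm n d) :
    ∃ pa : Fin n → Fin n, Set.InjOn pa ↑B ∧ ∀ b ∈ B, pa b < b ∧ pa b ∉ B := by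
  classical
  rw [mem_Adm] at hB
  set t : {x // x ∈ B} → Finset (Fin n) :=
    fun b => Finset.univ.filter (fun x => x < b.val ∧ x ∉ B) with ht
  have hall : ∀ s : Finset {x // x ∈ B}, s.card ≤ (s.biUnion t).card := by
    intro s
    rcases s.eq_empty_or_nonempty with rfl | hs
    · simp
    obtain ⟨bm, hbm, hmax⟩ := s.exists_max_image (fun b => b.val) hs
    -- elements of s, as elements of B, are all ≤ bm
    have hcard1 : s.card ≤ (B.filter (· ≤ bm.val)).card := by
      apply Finset.card_le_card_of_injOn (fun b => b.val)
      · intro b hb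
        simp only [Finset.coe_filter, Set.mem_setOf_eq]
        exact ⟨b.2, hmax b hb⟩
      · intro x _ y _ h; exact Subtype.ext h
    have hadm := hB.2 bm.val
    -- number of non-B elements below bm
    have hsplit : (Finset.univ.filter (fun x : Fin n => x < bm.val)).card = bm.val.val := by
      have : Finset.univ.filter (fun x : Fin n => x < bm.val) = Finset.Iio bm.val := by
        ext x; simp
      rw [this, Fin.card_Iio]
    have hsub : t bm ⊆ s.biUnion t := Finset.subset_biUnion_of_mem t hbm
    have hcount : (B.filter (· < bm.val)).card + (t bm).card = bm.val.val := by
      rw [← hsplit, ht]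
      rw [← Finset.card_union_of_disjoint]
      · congr 1
        ext x
        simp only [Finset.mem_union, Finset.mem_filter, Finset.mem_univ, true_and]
        tauto
      · rw [Finset.disjoint_left]
        rintro x hx1 hx2
        simp only [Finset.mem_filter, Finset.mem_univ, true_and] at hx1 hx2
        tauto
    have hle : (B.filter (· ≤ bm.val)).card = (B.filter (· < bm.val)).card + 1 := by
      have : B.filter (· ≤ bm.val) = insert bm.val (B.filter (· < bm.val)) := by
        ext x
        simp only [Finset.mem_filter, Finset.mem_insert]
        constructor
        · rintro ⟨hx, hle⟩
          rcases lt_or_eq_of_le hle with h | h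
          · exact Or.inr ⟨hx, h⟩
          · exact Or.inl h
        · rintro (rfl | ⟨hx, hlt⟩)
          · exact ⟨bm.2, le_rfl⟩
          · exact ⟨hx, le_of_lt hlt⟩
      rw [this, Finset.card_insert_of_notMem (by simp)]
    have := Finset.card_le_card hsub
    omega
  obtain ⟨f, hfinj, hf⟩ := (Finset.all_card_le_biUnion_card_iff_exists_injective t).1 hall
  refine ⟨fun x => if h : x ∈ B then f ⟨x, h⟩ else x, ?_, ?_⟩
  · intro x hx y hy h
    simp only [Finset.mem_coe] at hx hy
    simp only [dif_pos hx, dif_pos hy] at h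
    exact congrArg Subtype.val (hfinj h)
  · intro b hb
    simp only [dif_pos hb]
    have := hf ⟨b, hb⟩
    simp only [ht, Finset.mem_filter] at this
    exact ⟨this.2.1, this.2.2⟩


section Spanning
variable (n m : ℕ)

variable {n m}

lemma sq_mem_springerIdeal (i : Fin n) : (X i ^ 2 : MvPolynomial (Fin n) ℤ) ∈ springerIdeal n m :=
  Ideal.subset_span (Or.inl (Or.inl ⟨i, rfl⟩))

lemma prodgen_mem_springerIdeal {I : Finset (Fin n)} (hI : I.card = (n - m) / 2 + 1) :
    (∏ i ∈ I, X i : MvPolynomial (Fin n) ℤ) ∈ springerIdeal n m :=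
  Ideal.subset_span (Or.inl (Or.inr ⟨I, hI, rfl⟩))

lemma siggen_mem_springerIdeal {I₀ : Finset (Fin n)} {k : ℕ} (hk : k + I₀.card = n + 1) :
    (∑ J ∈ I₀.powersetCard k, ∏ i ∈ J, X i : MvPolynomial (Fin n) ℤ) ∈ springerIdeal n m :=
  Ideal.subset_span (Or.inr ⟨I₀, k, hk, rfl⟩)

lemma nonsq_mem_springerIdeal {α : Fin n →₀ ℕ} {i : Fin n} (hi : 2 ≤ α i) (c : ℤ) :
    (monomial α c : MvPolynomial (Fin n) ℤ) ∈ springerIdeal n m := by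
  have h1 : (monomial α c : MvPolynomial (Fin n) ℤ)
      = monomial (α - Finsupp.single i 2) c * X i ^ 2 := by
    rw [X_pow_eq_monomial, monomial_mul, mul_one]
    congr 1
    rw [tsub_add_cancel_of_le]
    rwa [Finsupp.single_le_iff]
  rw [h1]
  exact Ideal.mul_mem_left _ _ (sq_mem_springerIdeal i)

lemma bigcard_mem_springerIdeal {d : ℕ} (he : (n - m) / 2 = d) {S : Finset (Fin n)}
    (hS : d + 1 ≤ S.card) :
    (monomial (ind S) 1 : MvPolynomial (Fin n) ℤ) ∈ springerIdeal n m := by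
  obtain ⟨I, hIS, hIcard⟩ := Finset.exists_subset_card_eq hS
  have h1 : (monomial (ind S) 1 : MvPolynomial (Fin n) ℤ)
      = monomial (ind (S \ I)) 1 * ∏ i ∈ I, X i := by
    rw [prod_X_eq, monomial_mul, mul_one, ind_add_of_disjoint Finset.sdiff_disjoint,
      Finset.sdiff_union_of_subset hIS]
  rw [h1]
  exact Ideal.mul_mem_left _ _ (prodgen_mem_springerIdeal (by omega))

/-- the span + ideal submodule -/
noncomputable def PP (n m d : ℕ) : Submodule ℤ (MvPolynomial (Fin n) ℤ) :=
  Submodule.span ℤ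
      ((fun S => (monomial (ind S) 1 : MvPolynomial (Fin n) ℤ)) '' ↑(Adm n d)) ⊔
    (springerIdeal n m).restrictScalars ℤ

lemma ideal_mem_PP {d : ℕ} {p : MvPolynomial (Fin n) ℤ} (hp : p ∈ springerIdeal n m) :
    p ∈ PP n m d :=
  Submodule.mem_sup_right hp

lemma sqmon_mem_PP {d : ℕ} (hd2 : 2 * d ≤ n) (he : (n - m) / 2 = d) :
    ∀ N (S : Finset (Fin n)), mu n S < N →
      (monomial (ind S) 1 : MvPolynomial (Fin n) ℤ) ∈ PP n m d := by
  intro N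
  induction N with
  | zero => omega
  | succ N ih =>
    intro S hSN
    by_cases hcard : d + 1 ≤ S.card
    · exact ideal_mem_PP (bigcard_mem_springerIdeal he hcard)
    by_cases hadm : S ∈ Adm n d
    · exact Submodule.mem_sup_left (Submodule.subset_span ⟨S, hadm, rfl⟩)
    -- non-admissible case
    rw [mem_Adm] at hadm
    push_neg at hadm
    obtain ⟨t, ht⟩ := hadm (by omega)
    set J₀ := S.filter (· ≤ t) with hJ₀def
    set T := S \ J₀ with hTdef
    set k := J₀.card with hkdef
    have hJ₀S : J₀ ⊆ S := Finset.filter_subset _ _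
    have hdTJ : Disjoint J₀ T := Finset.disjoint_sdiff
    have hUTJ : J₀ ∪ T = S := Finset.union_sdiff_of_subset hJ₀S
    have hkS : k ≤ S.card := Finset.card_le_card hJ₀S
    have ht2 : t.val + 2 ≤ 2 * k := by omega
    have htn : t.val < n := t.isLt
    set Big := J₀ ∪ Finset.Ioi t with hBigdef
    have hJ₀Big : J₀ ⊆ Big := Finset.subset_union_left
    have hBigcard : Big.card = k + (n - 1 - t.val) := by
      rw [Finset.card_union_of_disjoint, Fin.card_Ioi]
      rw [Finset.disjoint_left]
      intro x hx1 hx2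
      have h1 := (Finset.mem_filter.1 hx1).2
      have h2 := Finset.mem_Ioi.1 hx2
      exact absurd h1 (not_le.2 h2)
    have hkn : k ≤ n + 1 - k := by omega
    obtain ⟨I₀, hJI, hIBig, hIcard⟩ :=
      Finset.exists_subsuperset_card_eq hJ₀Big (show J₀.card ≤ n + 1 - k by omega)
        (by omega)
    have hkI : k + I₀.card = n + 1 := by omega
    have hJ₀pc : J₀ ∈ I₀.powersetCard k := Finset.mem_powersetCard.2 ⟨hJI, rfl⟩
    have hgen : (monomial (ind T) 1 : MvPolynomial (Fin n) ℤ) *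
        (∑ J ∈ I₀.powersetCard k, ∏ i ∈ J, X i)
        = monomial (ind S) 1 +
          ∑ J ∈ (I₀.powersetCard k).erase J₀, monomial (ind T + ind J) 1 := by
      rw [Finset.mul_sum]
      rw [Finset.sum_congr rfl (fun J _ => by
        rw [prod_X_eq, monomial_mul, mul_one] :
          ∀ J ∈ I₀.powersetCard k, (monomial (ind T) 1 : MvPolynomial (Fin n) ℤ) *
            ∏ i ∈ J, X i = monomial (ind T + ind J) 1)]
      rw [← Finset.add_sum_erase _ _ hJ₀pc]
      have hTS : ind T + ind J₀ = ind S :=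
        ind_add_eq_iff.2 ⟨hdTJ.symm, by rw [Finset.union_comm]; exact hUTJ⟩
      rw [hTS]
    have hterm : ∀ J ∈ (I₀.powersetCard k).erase J₀,
        (monomial (ind T + ind J) 1 : MvPolynomial (Fin n) ℤ) ∈ PP n m d := by
      intro J hJ
      obtain ⟨hJne, hJpc⟩ := Finset.mem_erase.1 hJ
      obtain ⟨hJI₀, hJcard⟩ := Finset.mem_powersetCard.1 hJpc
      by_cases hdj : Disjoint T J
      · rw [ind_add_of_disjoint hdj]
        -- strict mu decrease
        have hJ0ne : ¬ J₀ ⊆ J := by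
          intro hsub
          exact hJne (Finset.eq_of_subset_of_card_le hsub (by omega)).symm
        obtain ⟨e, heJ₀, heJ⟩ := Finset.not_subset.1 hJ0ne
        have hmuJ : mu n J < mu n J₀ := by
          apply mu_strict heJ₀ heJ
          intro x hx
          obtain ⟨hxJ, hxJ₀⟩ := Finset.mem_sdiff.1 hx
          have hxBig : x ∈ Big := hIBig (hJI₀ hxJ)
          have hxI : x ∈ Finset.Ioi t := by
            rcases Finset.mem_union.1 hxBig with h | h
            · exact absurd h hxJ₀
            · exact h
          have hxt : t < x := Finset.mem_Ioi.1 hxI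
          have het : e ≤ t := (Finset.mem_filter.1 heJ₀).2
          exact lt_of_le_of_lt het hxt
        have hmuS : mu n (T ∪ J) < mu n S := by
          rw [← hUTJ, Finset.union_comm J₀ T, mu_union_eq (hdTJ.symm.mono_right le_rfl),
            mu_union_eq hdj]
          omega
        exact ih (T ∪ J) (by omega)
      · obtain ⟨i, hiT, hiJ⟩ := Finset.not_disjoint_iff.1 hdj
        apply ideal_mem_PP
        apply nonsq_mem_springerIdeal (i := i)
        have h1 := ind_apply T i
        have h2 := ind_apply J i
        rw [if_pos hiT] at h1
        rw [if_pos hiJ] at h2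
        rw [Finsupp.add_apply]
        omega
    have hfinal : (monomial (ind S) 1 : MvPolynomial (Fin n) ℤ)
        = monomial (ind T) 1 * (∑ J ∈ I₀.powersetCard k, ∏ i ∈ J, X i)
          - ∑ J ∈ (I₀.powersetCard k).erase J₀, monomial (ind T + ind J) 1 := by
      rw [hgen]; ring
    rw [hfinal]
    apply Submodule.sub_mem
    · exact ideal_mem_PP (Ideal.mul_mem_left _ _ (siggen_mem_springerIdeal hkI))
    · exact Submodule.sum_mem _ hterm

lemma all_mem_PP {d : ℕ} (hd2 : 2 * d ≤ n) (he : (n - m) / 2 = d)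
    (p : MvPolynomial (Fin n) ℤ) : p ∈ PP n m d := by
  rw [as_sum p]
  apply Submodule.sum_mem
  intro α hα
  have h1 : (monomial α (coeff α p) : MvPolynomial (Fin n) ℤ)
      = coeff α p • monomial α 1 := by
    rw [smul_monomial, smul_eq_mul, mul_one]
  rw [h1]
  apply Submodule.smul_mem
  by_cases hsq : ∀ i, α i ≤ 1
  · have hα' : α = ind α.support := by
      ext i
      rw [ind_apply]
      by_cases h : i ∈ α.support
      · rw [if_pos h]
        have h1 := Finsupp.mem_support_iff.1 h
        have h2 := hsq i
        omega
      · rw [if_neg h]; exact Finsupp.notMem_support_iff.1 h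
    rw [hα']
    exact sqmon_mem_PP hd2 he (mu n α.support + 1) α.support (by omega)
  · push_neg at hsq
    obtain ⟨i, hi⟩ := hsq
    exact ideal_mem_PP (nonsq_mem_springerIdeal hi 1)

end Spanning

section Assembly
variable {n m : ℕ}

noncomputable def piL (n m : ℕ) :
    MvPolynomial (Fin n) ℤ →ₗ[ℤ] (MvPolynomial (Fin n) ℤ ⧸ springerIdeal n m) :=
  (Submodule.Quotient.restrictScalarsEquiv ℤ (springerIdeal n m)).toLinearMap.comp
    (Submodule.mkQ ((springerIdeal n m).restrictScalars ℤ))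

lemma piL_apply (p : MvPolynomial (Fin n) ℤ) :
    piL n m p = Submodule.Quotient.mk p := rfl

lemma piL_surjective : Function.Surjective (piL n m) := by
  intro q
  obtain ⟨p, hp⟩ := Submodule.Quotient.mk_surjective _ q
  exact ⟨p, hp⟩

lemma piL_ideal {p : MvPolynomial (Fin n) ℤ} (hp : p ∈ springerIdeal n m) : piL n m p = 0 := by
  rw [piL_apply]
  exact (Submodule.Quotient.mk_eq_zero _).2 hp

noncomputable def fbar (B : Finset (Fin n)) (pa : Fin n → Fin n)
    (hker : ∀ p ∈ springerIdeal n m, fB B pa p = 0) :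
    (MvPolynomial (Fin n) ℤ ⧸ springerIdeal n m) →ₗ[ℤ] ℤ :=
  (Submodule.liftQ ((springerIdeal n m).restrictScalars ℤ) (fB B pa)
      (fun p hp => LinearMap.mem_ker.mpr (hker p hp))).comp
    (Submodule.Quotient.restrictScalarsEquiv ℤ (springerIdeal n m)).symm.toLinearMap

lemma fbar_piL (B : Finset (Fin n)) (pa : Fin n → Fin n)
    (hker : ∀ p ∈ springerIdeal n m, fB B pa p = 0) (p : MvPolynomial (Fin n) ℤ) :
    fbar B pa hker (piL n m p) = fB B pa p := by
  have h1 : (Submodule.Quotient.restrictScalarsEquiv ℤ (springerIdeal n m)).symm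
      (Submodule.Quotient.mk p) = Submodule.Quotient.mk p :=
    Submodule.Quotient.restrictScalarsEquiv_symm_mk ℤ (springerIdeal n m) p
  show (Submodule.liftQ ((springerIdeal n m).restrictScalars ℤ) (fB B pa)
      (fun p hp => LinearMap.mem_ker.mpr (hker p hp)))
      ((Submodule.Quotient.restrictScalarsEquiv ℤ (springerIdeal n m)).symm
        (Submodule.Quotient.mk p)) = fB B pa p
  rw [h1, Submodule.liftQ_apply]

theorem main_result (hm : m ≤ n) (hpar : n % 2 = m % 2) :
    Module.Free ℤ (MvPolynomial (Fin n) ℤ ⧸ springerIdeal n m) ∧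
    Module.finrank ℤ (MvPolynomial (Fin n) ℤ ⧸ springerIdeal n m) =
      Nat.choose n ((n - m) / 2) := by
  classical
  set d := (n - m) / 2 with hdm
  have hnm2 : 2 * d = n - m := by omega
  have hd2 : 2 * d ≤ n := by omega
  choose pa hpa using fun B : {x // x ∈ Adm n d} => exists_pairing B.2
  have hinj : ∀ B : {x // x ∈ Adm n d}, Set.InjOn (pa B) ↑B.val := fun B => (hpa B).1
  have hout : ∀ B : {x // x ∈ Adm n d}, ∀ b ∈ B.val, pa B b ∉ B.val :=
    fun B b hb => ((hpa B).2 b hb).2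
  have hlt : ∀ B : {x // x ∈ Adm n d}, ∀ b ∈ B.val, pa B b < b :=
    fun B b hb => ((hpa B).2 b hb).1
  have hBd : ∀ B : {x // x ∈ Adm n d}, B.val.card ≤ d := fun B => (mem_Adm.1 B.2).1
  -- vanishing on the ideal
  have hker : ∀ B : {x // x ∈ Adm n d}, ∀ p ∈ springerIdeal n m, fB B.val (pa B) p = 0 := by
    intro B p hp
    have hAll : ∀ g, fB B.val (pa B) (g * p) = 0 := by
      refine Submodule.span_induction ?_ ?_ ?_ ?_ hp
      · rintro x ((⟨i, rfl⟩ | ⟨I, hI, rfl⟩) | ⟨I₀, k, hk, rfl⟩) <;> intro g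
        · rw [mul_comm]
          exact fB_mul_sq_zero i g
        · rw [mul_comm]
          refine fB_mul_prod_zero (hout B) (hinj B) ?_ g
          have := hBd B
          omega
        · exact fB_mul_sigma_zero (hout B) (hinj B) hk g
      · intro g
        rw [mul_zero, map_zero]
      · intro x y _ _ hx hy g
        rw [mul_add, map_add, hx g, hy g, add_zero]
      · intro r x _ hx g
        rw [smul_eq_mul, ← mul_assoc]
        exact hx (g * r)
    have := hAll 1
    rwa [one_mul] at this
  set v : {x // x ∈ Adm n d} → (MvPolynomial (Fin n) ℤ ⧸ springerIdeal n m) :=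
    fun S => piL n m (monomial (ind S.val) 1) with hv
  set u := Finsupp.linearCombination ℤ v with hu
  have husurj : Function.Surjective u := by
    rw [← LinearMap.range_eq_top, Finsupp.range_linearCombination, eq_top_iff]
    intro q _
    obtain ⟨p, rfl⟩ := piL_surjective q
    have hp := all_mem_PP (m := m) hd2 hdm.symm p
    rw [PP, Submodule.mem_sup] at hp
    obtain ⟨a, ha, b, hb, rfl⟩ := hp
    rw [map_add, piL_ideal hb, add_zero]
    have h1 : piL n m a ∈ Submodule.map (piL n m)
        (Submodule.span ℤ ((fun S => (monomial (ind S) 1 : MvPolynomial (Fin n) ℤ))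
          '' ↑(Adm n d))) := Submodule.mem_map_of_mem ha
    rw [Submodule.map_span] at h1
    refine Submodule.span_le.2 ?_ h1
    rintro x ⟨y, ⟨S, hS, rfl⟩, rfl⟩
    exact Submodule.subset_span ⟨⟨S, hS⟩, rfl⟩
  have hzero : ∀ x : {x // x ∈ Adm n d} →₀ ℤ, u x = 0 → x = 0 := by
    intro x hx0
    by_contra hxne
    have hsupp : x.support.Nonempty := by
      rw [Finsupp.support_nonempty_iff]; exact hxne
    obtain ⟨B, hBsupp, hBmin⟩ := Finset.exists_min_image x.support (fun S => wt S.val) hsupp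
    have hcalc : fbar B.val (pa B) (hker B) (u x) = x B := by
      rw [hu, Finsupp.linearCombination_apply, Finsupp.sum, map_sum]
      rw [Finset.sum_eq_single B]
      · rw [map_smul, hv]
        simp only []
        rw [fbar_piL, fB_diag (hout B), smul_eq_mul, mul_one]
      · intro S hS hSne
        rw [map_smul, hv]
        simp only []
        rw [fbar_piL]
        by_cases hz : fB B.val (pa B) (monomial (ind S.val) 1) = 0
        · rw [hz, smul_zero]
        · exfalso
          have hSBne : S.val ≠ B.val := fun h => hSne (Subtype.ext h)
          have := fB_offdiag (hout B) (hinj B) (hlt B) hSBne hz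
          have h2 := hBmin S hS
          omega
      · intro h; exact absurd hBsupp h
    rw [hx0, map_zero] at hcalc
    exact (Finsupp.mem_support_iff.1 hBsupp) hcalc.symm
  have huinj : Function.Injective u := by
    intro x y hxy
    have := hzero (x - y) (by rw [map_sub, hxy, sub_self])
    exact sub_eq_zero.1 this
  have e : ({x // x ∈ Adm n d} →₀ ℤ) ≃ₗ[ℤ] (MvPolynomial (Fin n) ℤ ⧸ springerIdeal n m) :=
    LinearEquiv.ofBijective u ⟨huinj, husurj⟩
  constructor
  · exact Module.Free.of_equiv e
  · rw [← e.finrank_eq, Module.finrank_finsupp_self, Fintype.card_coe, Adm_card_eq,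
      AdmN_card n d (by omega)]

end Assembly
end SpringerAux

/-- For `0 ≤ m ≤ n` with `n ≡ m (mod 2)`, the quotient `R/R₁` is a free
`ℤ`-module of rank `C(n, (n−m)/2)`. -/
theorem stmt10 (n m : ℕ) (hm : m ≤ n) (hpar : n % 2 = m % 2) :
    Module.Free ℤ (MvPolynomial (Fin n) ℤ ⧸ springerIdeal n m) ∧
    Module.finrank ℤ (MvPolynomial (Fin n) ℤ ⧸ springerIdeal n m) =
      Nat.choose n ((n - m) / 2) :=
  SpringerAux.main_result hm hpar
end

section
/- Let μ = (μ_1,…,μ_N) with each μ_i ∈ {0,1,2}. The number of semi-standard Young tableaux of shape λ = two columns of lengths s+k and s, filled with μ_i copies of i (columns strictly increasing, rows non-decreasing), equals the number of crossingless matchings of the m(μ) points {i : μ_i = 1} with one platform of k points on the left, where m(μ) = #{i : μ_i = 1}; there is an explicit bijection between these two sets. -/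
open Finset

/-- Semi-standard Young tableaux of the two-column shape `λ = ω_s + ω_{s+k}`
(columns of lengths `s+k` and `s`) with entries in `{1,…,N}` and content `μ`:
the left column `T.1` and right column `T.2` are strictly increasing, rows are
weakly increasing, and the value `v` occurs exactly `μ v` times in total. -/
def SSYT (N s k : ℕ) (μ : Fin N → ℕ) : Type :=
  {T : (Fin (s + k) → Fin N) × (Fin s → Fin N) //
    StrictMono T.1 ∧ StrictMono T.2 ∧
    (∀ i : Fin s, T.1 (Fin.castLE (Nat.le_add_right s k) i) ≤ T.2 i) ∧
    (∀ v : Fin N,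
      (Finset.univ.filter fun j => T.1 j = v).card +
        (Finset.univ.filter fun j => T.2 j = v).card = μ v)}

/-- Crossingless matchings of the points `M_μ = {i : μ i = 1}` with one
platform of `k` points: a set of non-interleaving arcs `(i,j)`, `i < j`, among
the points of `M_μ`, pairwise disjoint, with exactly `k` points of `M_μ` left
unmatched (connected to the platform), and no unmatched point nested strictly
inside an arc. -/
def PlatformMatchings (N k : ℕ) (μ : Fin N → ℕ) : Type :=
  {M : Finset (Fin N × Fin N) //
    (∀ p ∈ M, p.1 < p.2 ∧ μ p.1 = 1 ∧ μ p.2 = 1) ∧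
    (∀ p ∈ M, ∀ q ∈ M, p ≠ q →
      p.1 ≠ q.1 ∧ p.1 ≠ q.2 ∧ p.2 ≠ q.1 ∧ p.2 ≠ q.2) ∧
    (∀ p ∈ M, ∀ q ∈ M, ¬(p.1 < q.1 ∧ q.1 < p.2 ∧ p.2 < q.2)) ∧
    (Finset.univ.filter fun i : Fin N => μ i = 1).card = 2 * M.card + k ∧
    (∀ x : Fin N, μ x = 1 → (∀ p ∈ M, p.1 ≠ x ∧ p.2 ≠ x) →
      ∀ p ∈ M, ¬(p.1 < x ∧ x < p.2))}


namespace Stmt16Aux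

attribute [local instance 0] Classical.propDecidable

variable {N : ℕ}

/-- number of elements of `X` with value `< t` -/
def cnt (X : Finset (Fin N)) (t : ℕ) : ℕ := (X.filter fun x => x.val < t).card

lemma cnt_zero (X : Finset (Fin N)) : cnt X 0 = 0 := by
  simp [cnt]

lemma cnt_succ (X : Finset (Fin N)) (t : ℕ) :
    cnt X (t + 1) = cnt X t + (if ∃ x ∈ X, (x : ℕ) = t then 1 else 0) := by
  classical
  unfold cnt
  have hsplit : (X.filter fun x => x.val < t + 1) =
      (X.filter fun x => x.val < t) ∪ (X.filter fun x => x.val = t) := by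
    ext x
    simp only [mem_filter, mem_union, ← and_or_left]
    exact and_congr_right fun _ => by omega
  have hdisj : Disjoint (X.filter fun x => x.val < t) (X.filter fun x => x.val = t) := by
    rw [Finset.disjoint_left]
    intro a ha hb
    simp only [mem_filter] at ha hb
    omega
  rw [hsplit, card_union_of_disjoint hdisj]
  congr 1
  split_ifs with h
  · obtain ⟨x, hx, hxt⟩ := h
    have : (X.filter fun x => x.val = t) = {x} := by
      ext y
      simp only [mem_filter, mem_singleton]
      constructor
      · rintro ⟨hy, hyt⟩; exact Fin.ext (by omega)
      · rintro rfl; exact ⟨hx, hxt⟩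
    simp [this]
  · push_neg at h
    have : (X.filter fun x => x.val = t) = ∅ := by
      ext y
      simp only [mem_filter, notMem_empty, iff_false]
      rintro ⟨hy, hyt⟩
      exact h y hy hyt
    simp [this]

lemma cnt_interval (X : Finset (Fin N)) {t u : ℕ} (h : t ≤ u) :
    cnt X u = cnt X t + (X.filter fun x => t ≤ x.val ∧ x.val < u).card := by
  classical
  unfold cnt
  have hsplit : (X.filter fun x => x.val < u) =
      (X.filter fun x => x.val < t) ∪ (X.filter fun x => t ≤ x.val ∧ x.val < u) := by
    ext x
    simp only [mem_filter, mem_union, ← and_or_left]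
    exact and_congr_right fun _ => by omega
  have hdisj : Disjoint (X.filter fun x => x.val < t)
      (X.filter fun x => t ≤ x.val ∧ x.val < u) := by
    rw [Finset.disjoint_left]
    intro a ha hb
    simp only [mem_filter] at ha hb
    omega
  rw [hsplit, card_union_of_disjoint hdisj]

/-- height function of the up-down walk determined by openers `A` and closers `C`. -/
def ht (A C : Finset (Fin N)) (t : ℕ) : ℤ := (cnt A t : ℤ) - (cnt C t : ℤ)

lemma ht_zero (A C : Finset (Fin N)) : ht A C 0 = 0 := by simp [ht, cnt_zero]

lemma ht_succ_up (A C : Finset (Fin N)) (hd : Disjoint A C) {t : ℕ}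
    (h : ∃ a ∈ A, (a : ℕ) = t) : ht A C (t + 1) = ht A C t + 1 := by
  have hC : ¬ ∃ c ∈ C, (c : ℕ) = t := by
    rintro ⟨c, hc, hct⟩
    obtain ⟨a, ha, hat⟩ := h
    have : a = c := Fin.ext (by omega)
    exact Finset.disjoint_left.1 hd ha (this ▸ hc)
  unfold ht
  rw [cnt_succ A t, cnt_succ C t, if_pos h, if_neg hC]
  push_cast; ring

lemma ht_succ_down (A C : Finset (Fin N)) (hd : Disjoint A C) {t : ℕ}
    (h : ∃ c ∈ C, (c : ℕ) = t) : ht A C (t + 1) = ht A C t - 1 := by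
  have hA : ¬ ∃ a ∈ A, (a : ℕ) = t := by
    rintro ⟨a, ha, hat⟩
    obtain ⟨c, hc, hct⟩ := h
    have : a = c := Fin.ext (by omega)
    exact Finset.disjoint_left.1 hd ha (this ▸ hc)
  unfold ht
  rw [cnt_succ A t, cnt_succ C t, if_neg hA, if_pos h]
  push_cast; ring

lemma ht_step_le (A C : Finset (Fin N)) (t : ℕ) : ht A C (t + 1) ≤ ht A C t + 1 := by
  unfold ht
  rw [cnt_succ A t, cnt_succ C t]
  split_ifs <;> push_cast <;> omega

lemma ht_step_ge (A C : Finset (Fin N)) (t : ℕ) : ht A C t - 1 ≤ ht A C (t + 1) := by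
  unfold ht
  rw [cnt_succ A t, cnt_succ C t]
  split_ifs <;> push_cast <;> omega

/-- if the walk goes up at step `t`, there is an opener at `t` -/
lemma exists_opener_of_up (A C : Finset (Fin N)) {t : ℕ}
    (h : ht A C t + 1 ≤ ht A C (t + 1)) : ∃ a ∈ A, (a : ℕ) = t := by
  by_contra hA
  unfold ht at h
  rw [cnt_succ A t, cnt_succ C t, if_neg hA] at h
  split_ifs at h <;> push_cast at h <;> omega

lemma exists_closer_of_down (A C : Finset (Fin N)) {t : ℕ}
    (h : ht A C (t + 1) ≤ ht A C t - 1) : ∃ c ∈ C, (c : ℕ) = t := by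
  by_contra hC
  unfold ht at h
  rw [cnt_succ A t, cnt_succ C t, if_neg hC] at h
  split_ifs at h <;> push_cast at h <;> omega

lemma ht_sub (A C : Finset (Fin N)) {t u : ℕ} (h : t ≤ u) :
    ht A C u = ht A C t + ((A.filter fun x => t ≤ x.val ∧ x.val < u).card : ℤ)
      - ((C.filter fun x => t ≤ x.val ∧ x.val < u).card : ℤ) := by
  unfold ht
  rw [cnt_interval A h, cnt_interval C h]
  push_cast; ring



/-- the canonical crossingless matching determined by openers `A` and closers `C` -/
noncomputable def mOf (A C : Finset (Fin N)) : Finset (Fin N × Fin N) :=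
  univ.filter fun p => p.1 ∈ A ∧ p.2 ∈ C ∧ p.1 < p.2 ∧
    ht A C (p.2.val + 1) = ht A C (p.1.val + 1) - 1 ∧
    ∀ t : ℕ, p.1.val < t → t ≤ p.2.val → ht A C (p.1.val + 1) ≤ ht A C t

lemma mem_mOf {A C : Finset (Fin N)} {p : Fin N × Fin N} :
    p ∈ mOf A C ↔ p.1 ∈ A ∧ p.2 ∈ C ∧ p.1 < p.2 ∧
      ht A C (p.2.val + 1) = ht A C (p.1.val + 1) - 1 ∧
      ∀ t : ℕ, p.1.val < t → t ≤ p.2.val → ht A C (p.1.val + 1) ≤ ht A C t := by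
  simp [mOf]

variable {A C : Finset (Fin N)}

lemma mOf_inj1 (hd : Disjoint A C) {p q : Fin N × Fin N}
    (hp : p ∈ mOf A C) (hq : q ∈ mOf A C) (h : p.1 = q.1) : p = q := by
  obtain ⟨hp1, hp2, hplt, hpht, hpint⟩ := mem_mOf.1 hp
  obtain ⟨hq1, hq2, hqlt, hqht, hqint⟩ := mem_mOf.1 hq
  rcases lt_trichotomy p.2 q.2 with h2 | h2 | h2
  · exfalso
    have := hqint (p.2.val + 1) (by rw [← h] at hqlt ⊢; exact Nat.lt_succ_of_lt hplt)
      (by exact_mod_cast h2)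
    rw [h] at hpht
    omega
  · exact Prod.ext h h2
  · exfalso
    have := hpint (q.2.val + 1) (by rw [h]; exact Nat.lt_succ_of_lt hqlt)
      (by exact_mod_cast h2)
    rw [← h] at hqht
    omega

lemma mOf_inj2 (hd : Disjoint A C) {p q : Fin N × Fin N}
    (hp : p ∈ mOf A C) (hq : q ∈ mOf A C) (h : p.2 = q.2) : p = q := by
  obtain ⟨hp1, hp2, hplt, hpht, hpint⟩ := mem_mOf.1 hp
  obtain ⟨hq1, hq2, hqlt, hqht, hqint⟩ := mem_mOf.1 hq
  rcases lt_trichotomy p.1 q.1 with h1 | h1 | h1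
  · exfalso
    have hup : ht A C (q.1.val + 1) = ht A C q.1.val + 1 :=
      ht_succ_up A C hd ⟨q.1, hq1, rfl⟩
    have hint := hpint q.1.val (by exact_mod_cast h1)
      (le_of_lt (by rw [← h] at hqlt; exact_mod_cast hqlt))
    rw [h] at hpht
    omega
  · exact Prod.ext h1 h
  · exfalso
    have hup : ht A C (p.1.val + 1) = ht A C p.1.val + 1 :=
      ht_succ_up A C hd ⟨p.1, hp1, rfl⟩
    have hint := hqint p.1.val (by exact_mod_cast h1)
      (le_of_lt (by rw [h] at hplt; exact_mod_cast hplt))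
    rw [← h] at hqht
    omega

lemma mOf_noncross {p q : Fin N × Fin N}
    (hp : p ∈ mOf A C) (hq : q ∈ mOf A C) :
    ¬(p.1 < q.1 ∧ q.1 < p.2 ∧ p.2 < q.2) := by
  rintro ⟨h1, h2, h3⟩
  obtain ⟨hp1, hp2, hplt, hpht, hpint⟩ := mem_mOf.1 hp
  obtain ⟨hq1, hq2, hqlt, hqht, hqint⟩ := mem_mOf.1 hq
  have e1 := hpint (q.1.val + 1) (Nat.lt_succ_of_lt (by exact_mod_cast h1))
    (by exact_mod_cast h2)
  have e2 := hqint (p.2.val + 1) (Nat.lt_succ_of_lt (by exact_mod_cast h2))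
    (by exact_mod_cast h3)
  omega

lemma closer_matched (hd : Disjoint A C) (hnn : ∀ t, 0 ≤ ht A C t)
    {c : Fin N} (hc : c ∈ C) : ∃ p ∈ mOf A C, p.2 = c := by
  classical
  have hdown : ht A C (c.val + 1) = ht A C c.val - 1 := ht_succ_down A C hd ⟨c, hc, rfl⟩
  have hv0 : 0 ≤ ht A C (c.val + 1) := hnn _
  obtain ⟨t', hsp, hle, hgt⟩ :
      ∃ t', ht A C t' ≤ ht A C (c.val + 1) ∧ t' ≤ c.val ∧
        ∀ u, t' < u → u ≤ c.val → ¬ ht A C u ≤ ht A C (c.val + 1) := by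
    refine ⟨Nat.findGreatest (fun t => ht A C t ≤ ht A C (c.val + 1)) c.val,
      Nat.findGreatest_spec (P := fun t => ht A C t ≤ ht A C (c.val + 1))
        (Nat.zero_le _) (by show ht A C 0 ≤ _; rw [ht_zero]; exact hv0),
      Nat.findGreatest_le _,
      fun u h1 h2 => Nat.findGreatest_is_greatest
        (P := fun t => ht A C t ≤ ht A C (c.val + 1)) h1 h2⟩
  have hltb : t' < c.val := by
    rcases lt_or_eq_of_le hle with h | h
    · exact h
    · exfalso; rw [h] at hsp; omega
  have hup : ht A C (t' + 1) = ht A C t' + 1 := by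
    have h1 := ht_step_le A C t'
    have h2 := hgt (t' + 1) (Nat.lt_succ_self _) hltb
    omega
  obtain ⟨a, ha, hat⟩ := exists_opener_of_up A C (t := t') (by rw [hup])
  refine ⟨(a, c), mem_mOf.2 ⟨ha, hc, ?_, ?_, ?_⟩, rfl⟩
  · show a < c
    rw [Fin.lt_def]; omega
  · show ht A C (c.val + 1) = ht A C (a.val + 1) - 1
    rw [hat, hup]
    have := hgt (t' + 1) (Nat.lt_succ_self _) hltb
    have := ht_step_le A C t'
    omega
  · show ∀ t : ℕ, a.val < t → t ≤ c.val → ht A C (a.val + 1) ≤ ht A C t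
    intro t h1 h2
    rw [hat, hup]
    rcases lt_or_eq_of_le h2 with h2' | h2'
    · have := hgt t (by omega) (by omega)
      omega
    · subst h2'
      omega

lemma opener_matched_of_drop (hd : Disjoint A C) {x : Fin N} (hx : x ∈ A)
    (hdrop : ∃ u, x.val < u ∧ ht A C u < ht A C (x.val + 1)) :
    ∃ p ∈ mOf A C, p.1 = x := by
  classical
  have hdrop' : ∃ u, x.val < u ∧ ht A C u ≤ ht A C (x.val + 1) - 1 := by
    obtain ⟨u, h1, h2⟩ := hdrop; exact ⟨u, h1, by omega⟩
  obtain ⟨t', ⟨hxt', hht'⟩, hmin⟩ :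
      ∃ t', (x.val < t' ∧ ht A C t' ≤ ht A C (x.val + 1) - 1) ∧
        ∀ u, u < t' → ¬(x.val < u ∧ ht A C u ≤ ht A C (x.val + 1) - 1) :=
    ⟨Nat.find hdrop', Nat.find_spec hdrop', fun u hu => Nat.find_min hdrop' hu⟩
  have hne : t' ≠ x.val + 1 := by
    intro h
    rw [h] at hht'
    omega
  have hge2 : x.val + 2 ≤ t' := by omega
  have hhb : ht A C (x.val + 1) ≤ ht A C (t' - 1) := by
    have h1 := hmin (t' - 1) (by omega)
    push_neg at h1
    have := h1 (by omega)
    omega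
  have h2 : t' - 1 + 1 = t' := by omega
  have hdown : ht A C t' = ht A C (t' - 1) - 1 := by
    have h1 := ht_step_ge A C (t' - 1)
    rw [h2] at h1
    omega
  obtain ⟨c, hcC, hcb⟩ := exists_closer_of_down A C (t := t' - 1) (by rw [h2]; omega)
  have hcb' : c.val = t' - 1 := hcb
  refine ⟨(x, c), mem_mOf.2 ⟨hx, hcC, ?_, ?_, ?_⟩, rfl⟩
  · show x < c
    rw [Fin.lt_def]; omega
  · show ht A C (c.val + 1) = ht A C (x.val + 1) - 1
    have hc1 : c.val + 1 = t' := by omega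
    rw [hc1]
    omega
  · show ∀ t : ℕ, x.val < t → t ≤ c.val → ht A C (x.val + 1) ≤ ht A C t
    intro t h1 h2
    have h3 : t < t' := by omega
    have := hmin t h3
    push_neg at this
    have := this h1
    omega

lemma card_mOf (hd : Disjoint A C) (hnn : ∀ t, 0 ≤ ht A C t) :
    (mOf A C).card = C.card := by
  apply Finset.card_bij (fun p _ => p.2)
  · intro p hp; exact (mem_mOf.1 hp).2.1
  · intro p hp q hq h; exact mOf_inj2 hd hp hq h
  · intro c hc
    obtain ⟨p, hp, h⟩ := closer_matched hd hnn hc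
    exact ⟨p, hp, h⟩

lemma no_unmatched_inside (hd : Disjoint A C) (hnn : ∀ t, 0 ≤ ht A C t)
    {x : Fin N} (hx : x ∈ A ∪ C)
    (hum : ∀ p ∈ mOf A C, p.1 ≠ x ∧ p.2 ≠ x) :
    ∀ p ∈ mOf A C, ¬(p.1 < x ∧ x < p.2) := by
  rintro p hp ⟨h1, h2⟩
  rcases mem_union.1 hx with hxA | hxC
  · obtain ⟨hp1, hp2, hplt, hpht, hpint⟩ := mem_mOf.1 hp
    have hdrop : ∃ u, x.val < u ∧ ht A C u < ht A C (x.val + 1) := by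
      refine ⟨p.2.val + 1, by exact_mod_cast Nat.lt_succ_of_lt h2, ?_⟩
      have := hpint (x.val + 1) (Nat.lt_succ_of_lt (by exact_mod_cast h1))
        (by exact_mod_cast h2)
      omega
    obtain ⟨q, hq, hq1⟩ := opener_matched_of_drop hd hxA hdrop
    exact (hum q hq).1 hq1
  · obtain ⟨q, hq, hq2⟩ := closer_matched hd hnn hxC
    exact (hum q hq).2 hq2



/-! ### the weight context -/

variable {μ : Fin N → ℕ}

def Sset (μ : Fin N → ℕ) : Finset (Fin N) := univ.filter fun i => μ i = 1

def Dset (μ : Fin N → ℕ) : Finset (Fin N) := univ.filter fun i => μ i = 2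

lemma mem_Sset {x : Fin N} : x ∈ Sset μ ↔ μ x = 1 := by simp [Sset]

lemma mem_Dset {x : Fin N} : x ∈ Dset μ ↔ μ x = 2 := by simp [Dset]

/-- a ballot sequence: openers `A`, closers `Sset μ \ A`, with the
prescribed cardinalities and nonnegative walk. -/
def IsBallot (s k : ℕ) (μ : Fin N → ℕ) (A : Finset (Fin N)) : Prop :=
  A ⊆ Sset μ ∧ (Dset μ).card + A.card = s + k ∧
    (Dset μ).card + (Sset μ \ A).card = s ∧
    ∀ t, 0 ≤ ht A (Sset μ \ A) t

lemma ballot_disjoint {A : Finset (Fin N)} : Disjoint A (Sset μ \ A) :=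
  Finset.disjoint_sdiff

lemma sum_mu (hμ : ∀ i, μ i ≤ 2) :
    ∑ i, μ i = 2 * (Dset μ).card + (Sset μ).card := by
  classical
  rw [← Finset.sum_filter_add_sum_filter_not univ (fun i => μ i = 2) μ]
  have hD : ∑ i ∈ univ.filter (fun i => μ i = 2), μ i = 2 * (Dset μ).card := by
    rw [Finset.sum_congr rfl (fun i hi => (mem_filter.1 hi).2), Finset.sum_const,
      smul_eq_mul, mul_comm]
    rfl
  have hrest : ∑ i ∈ univ.filter (fun i => ¬ μ i = 2), μ i = (Sset μ).card := by
    rw [← Finset.sum_filter_add_sum_filter_not (univ.filter (fun i => ¬ μ i = 2))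
      (fun i => μ i = 1) μ]
    have e1 : (univ.filter (fun i => ¬ μ i = 2)).filter (fun i => μ i = 1) = Sset μ := by
      ext x
      simp only [mem_filter, mem_univ, true_and, Sset]
      constructor
      · rintro ⟨_, h⟩; exact h
      · intro h; exact ⟨by omega, h⟩
    have e2 : ∑ i ∈ ((univ.filter (fun i => ¬ μ i = 2)).filter (fun i => ¬ μ i = 1)), μ i
        = 0 := by
      apply Finset.sum_eq_zero
      intro i hi
      simp only [mem_filter] at hi
      have := hμ i
      omega
    rw [e1, e2, add_zero,
      Finset.sum_congr rfl (fun i hi => mem_Sset.1 hi), Finset.sum_const,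
      smul_eq_mul, mul_one]
  rw [hD, hrest]

/-! ### from matchings to ballots -/

/-- the opener set of a matching: points that are not right endpoints. -/
noncomputable def Aof (μ : Fin N → ℕ) (M : Finset (Fin N × Fin N)) : Finset (Fin N) :=
  (Sset μ).filter fun x => ∀ p ∈ M, p.2 ≠ x

lemma mem_Aof {M : Finset (Fin N × Fin N)} {x : Fin N} :
    x ∈ Aof μ M ↔ μ x = 1 ∧ ∀ p ∈ M, p.2 ≠ x := by
  simp [Aof, Sset]

lemma Cof_eq {M : Finset (Fin N × Fin N)} {x : Fin N} :
    x ∈ Sset μ \ Aof μ M ↔ μ x = 1 ∧ ∃ p ∈ M, p.2 = x := by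
  simp only [mem_sdiff, mem_Sset, mem_Aof]
  constructor
  · rintro ⟨hx, h⟩
    push_neg at h
    exact ⟨hx, h hx⟩
  · rintro ⟨hx, p, hp, hpx⟩
    exact ⟨hx, fun h => h.2 p hp hpx⟩

/-- left partner of a right endpoint -/
noncomputable def partnerL (M : Finset (Fin N × Fin N)) (c : Fin N) : Fin N :=
  if h : ∃ p ∈ M, p.2 = c then h.choose.1 else c

lemma partnerL_spec {M : Finset (Fin N × Fin N)} {c : Fin N}
    (h : ∃ p ∈ M, p.2 = c) : ∃ p ∈ M, p.1 = partnerL M c ∧ p.2 = c := by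
  unfold partnerL
  rw [dif_pos h]
  exact ⟨h.choose, h.choose_spec.1, rfl, h.choose_spec.2⟩

/-- right partner of a left endpoint -/
noncomputable def partnerR (M : Finset (Fin N × Fin N)) (a : Fin N) : Fin N :=
  if h : ∃ p ∈ M, p.1 = a then h.choose.2 else a

lemma partnerR_spec {M : Finset (Fin N × Fin N)} {a : Fin N}
    (h : ∃ p ∈ M, p.1 = a) : ∃ p ∈ M, p.1 = a ∧ p.2 = partnerR M a := by
  unfold partnerR
  rw [dif_pos h]
  exact ⟨h.choose, h.choose_spec.1, h.choose_spec.2, rfl⟩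

section PMaxioms

variable {M : Finset (Fin N × Fin N)}
  (h1 : ∀ p ∈ M, p.1 < p.2 ∧ μ p.1 = 1 ∧ μ p.2 = 1)
  (h2 : ∀ p ∈ M, ∀ q ∈ M, p ≠ q → p.1 ≠ q.1 ∧ p.1 ≠ q.2 ∧ p.2 ≠ q.1 ∧ p.2 ≠ q.2)
  (h3 : ∀ p ∈ M, ∀ q ∈ M, ¬(p.1 < q.1 ∧ q.1 < p.2 ∧ p.2 < q.2))
  (h5 : ∀ x : Fin N, μ x = 1 → (∀ p ∈ M, p.1 ≠ x ∧ p.2 ≠ x) →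
      ∀ p ∈ M, ¬(p.1 < x ∧ x < p.2))

include h1 h2 in
/-- a left endpoint of the matching is an opener -/
lemma left_mem_Aof {p : Fin N × Fin N} (hp : p ∈ M) : p.1 ∈ Aof μ M := by
  rw [mem_Aof]
  refine ⟨(h1 p hp).2.1, fun q hq hq2 => ?_⟩
  by_cases hpq : p = q
  · subst hpq
    exact absurd hq2 (ne_of_gt (h1 p hp).1)
  · exact (h2 p hp q hq hpq).2.1 hq2.symm

include h1 in
lemma right_mem_Cof {p : Fin N × Fin N} (hp : p ∈ M) : p.2 ∈ Sset μ \ Aof μ M :=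
  Cof_eq.2 ⟨(h1 p hp).2.2, p, hp, rfl⟩

include h1 h2 in
lemma card_Cof : (Sset μ \ Aof μ M).card = M.card := by
  symm
  apply Finset.card_bij (fun p _ => p.2)
  · intro p hp; exact right_mem_Cof h1 hp
  · intro p hp q hq h
    by_contra hpq
    exact (h2 p hp q hq hpq).2.2.2 h
  · intro c hc
    obtain ⟨_, p, hp, hpc⟩ := Cof_eq.1 hc
    exact ⟨p, hp, hpc⟩

include h2 in
lemma partnerL_injOn {s : Set (Fin N)} (hs : ∀ c ∈ s, ∃ p ∈ M, p.2 = c) :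
    Set.InjOn (partnerL M) s := by
  intro c hc c' hc' heq
  obtain ⟨q, hq, hq1, hq2⟩ := partnerL_spec (hs c hc)
  obtain ⟨q', hq', hq1', hq2'⟩ := partnerL_spec (hs c' hc')
  by_contra hne
  have hqq : q ≠ q' := by
    intro h; rw [← hq2, ← hq2', h] at hne; exact hne rfl
  exact (h2 q hq q' hq' hqq).1 (by rw [hq1, hq1', heq])

include h1 h2 h3 in
lemma partnerL_in_interval {p : Fin N × Fin N} (hp : p ∈ M) {u : ℕ} (hu2 : u ≤ p.2.val)
    {c : Fin N}
    (hc : c ∈ (Sset μ \ Aof μ M).filter fun x => p.1.val + 1 ≤ x.val ∧ x.val < u) :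
    partnerL M c ∈ (Aof μ M).filter fun x => p.1.val + 1 ≤ x.val ∧ x.val < u := by
  obtain ⟨hcC, hc1, hc2⟩ := mem_filter.1 hc
  obtain ⟨_, hex⟩ := Cof_eq.1 hcC
  obtain ⟨q, hq, hq1, hq2⟩ := partnerL_spec hex
  have hqA : partnerL M c ∈ Aof μ M := hq1 ▸ left_mem_Aof h1 h2 hq
  have hqnep : q ≠ p := by
    intro h
    have hh : p.2 = c := h ▸ hq2
    rw [← hh] at hc2
    omega
  have hq12 : q.1 < q.2 := (h1 q hq).1
  rw [mem_filter]
  refine ⟨hqA, ?_, ?_⟩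
  · -- p.1.val + 1 ≤ (partnerL M c).val
    rw [← hq1]
    rcases lt_trichotomy q.1 p.1 with h | h | h
    · exfalso
      refine h3 q hq p hp ⟨h, ?_, ?_⟩
      · rw [hq2, Fin.lt_def]; omega
      · rw [hq2, Fin.lt_def]; omega
    · exact absurd h.symm ((h2 p hp q hq (Ne.symm hqnep)).1)
    · rw [Fin.lt_def] at h; omega
  · -- (partnerL M c).val < u
    rw [← hq1]
    rw [hq2, Fin.lt_def] at hq12
    omega

include h1 h2 h3 h5 in
/-- key interval estimate: the walk of `Aof M` stays at or above its level
after an opener, up to the matching closer. -/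
lemma Aof_interval_ge {p : Fin N × Fin N} (hp : p ∈ M) {u : ℕ}
    (hu : p.1.val < u) (hu2 : u ≤ p.2.val) :
    ht (Aof μ M) (Sset μ \ Aof μ M) (p.1.val + 1) ≤ ht (Aof μ M) (Sset μ \ Aof μ M) u := by
  have hle : p.1.val + 1 ≤ u := hu
  rw [ht_sub (Aof μ M) (Sset μ \ Aof μ M) hle]
  have hcard : ((Sset μ \ Aof μ M).filter fun x => p.1.val + 1 ≤ x.val ∧ x.val < u).card ≤
      ((Aof μ M).filter fun x => p.1.val + 1 ≤ x.val ∧ x.val < u).card := by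
    apply Finset.card_le_card_of_injOn (partnerL M)
    · intro c hc
      exact partnerL_in_interval h1 h2 h3 hp hu2 hc
    · apply partnerL_injOn h2
      intro c hc
      obtain ⟨hcC, _, _⟩ := mem_filter.1 hc
      exact (Cof_eq.1 hcC).2
  omega

include h1 h2 h3 h5 in
/-- key drop: the walk of `Aof M` falls by exactly one over the span of an arc. -/
lemma Aof_drop {p : Fin N × Fin N} (hp : p ∈ M) :
    ht (Aof μ M) (Sset μ \ Aof μ M) (p.2.val + 1)
      = ht (Aof μ M) (Sset μ \ Aof μ M) (p.1.val + 1) - 1 := by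
  have hplt : p.1 < p.2 := (h1 p hp).1
  rw [Fin.lt_def] at hplt
  have hle : p.1.val + 1 ≤ p.2.val + 1 := by omega
  rw [ht_sub (Aof μ M) (Sset μ \ Aof μ M) hle]
  have hCeq : ((Sset μ \ Aof μ M).filter fun x => p.1.val + 1 ≤ x.val ∧ x.val < p.2.val + 1)
      = insert p.2
        ((Sset μ \ Aof μ M).filter fun x => p.1.val + 1 ≤ x.val ∧ x.val < p.2.val) := by
    ext x
    simp only [mem_insert, mem_filter]
    constructor
    · rintro ⟨hx, hx1, hx2⟩
      by_cases h : x = p.2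
      · exact Or.inl h
      · refine Or.inr ⟨hx, hx1, ?_⟩
        have : x.val ≠ p.2.val := fun hh => h (Fin.ext hh)
        omega
    · rintro (h | ⟨hx, hx1, hx2⟩)
      · subst h
        exact ⟨right_mem_Cof h1 hp, by omega, by omega⟩
      · exact ⟨hx, hx1, by omega⟩
  have hAeq : ((Aof μ M).filter fun x => p.1.val + 1 ≤ x.val ∧ x.val < p.2.val + 1)
      = (Aof μ M).filter fun x => p.1.val + 1 ≤ x.val ∧ x.val < p.2.val := by
    ext x
    simp only [mem_filter]
    constructor
    · rintro ⟨hx, hx1, hx2⟩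
      refine ⟨hx, hx1, ?_⟩
      have hne : x ≠ p.2 := by
        intro h
        subst h
        obtain ⟨_, hA⟩ := mem_Aof.1 hx
        exact hA p hp rfl
      have : x.val ≠ p.2.val := fun hh => hne (Fin.ext hh)
      omega
    · rintro ⟨hx, hx1, hx2⟩
      exact ⟨hx, hx1, by omega⟩
  have hle1 : ((Sset μ \ Aof μ M).filter fun x => p.1.val + 1 ≤ x.val ∧ x.val < p.2.val).card ≤
      ((Aof μ M).filter fun x => p.1.val + 1 ≤ x.val ∧ x.val < p.2.val).card := by
    apply Finset.card_le_card_of_injOn (partnerL M)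
    · intro c hc
      exact partnerL_in_interval h1 h2 h3 hp (le_refl _) hc
    · apply partnerL_injOn h2
      intro c hc
      obtain ⟨hcC, _, _⟩ := mem_filter.1 hc
      exact (Cof_eq.1 hcC).2
  have hle2 : ((Aof μ M).filter fun x => p.1.val + 1 ≤ x.val ∧ x.val < p.2.val).card ≤
      ((Sset μ \ Aof μ M).filter fun x => p.1.val + 1 ≤ x.val ∧ x.val < p.2.val).card := by
    have hexq : ∀ a ∈ ((Aof μ M).filter fun x => p.1.val + 1 ≤ x.val ∧ x.val < p.2.val),
        ∃ q ∈ M, q.1 = a := by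
      intro a ha
      obtain ⟨haA, ha1, ha2⟩ := mem_filter.1 ha
      obtain ⟨haμ, haR⟩ := mem_Aof.1 haA
      by_contra hno
      push_neg at hno
      have hun : ∀ q ∈ M, q.1 ≠ a ∧ q.2 ≠ a := fun q hq => ⟨hno q hq, haR q hq⟩
      exact h5 a haμ hun p hp ⟨by rw [Fin.lt_def]; omega, by rw [Fin.lt_def]; omega⟩
    apply Finset.card_le_card_of_injOn (partnerR M)
    · intro a ha
      obtain ⟨haA, ha1, ha2⟩ := mem_filter.1 ha
      obtain ⟨q, hq, hq1, hq2⟩ := partnerR_spec (hexq a ha)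
      have hqC : partnerR M a ∈ Sset μ \ Aof μ M := hq2 ▸ right_mem_Cof h1 hq
      have hqnep : q ≠ p := by
        intro h
        have hh : p.1 = a := h ▸ hq1
        rw [← hh] at ha1
        omega
      have halt : a < partnerR M a := by
        have := (h1 q hq).1
        rwa [hq1, hq2] at this
      rw [Fin.lt_def] at halt
      rw [Finset.mem_coe, mem_filter]
      refine ⟨hqC, by omega, ?_⟩
      · -- (partnerR M a).val < p.2.val
        rcases lt_trichotomy (partnerR M a) p.2 with h | h | h
        · rw [Fin.lt_def] at h; exact h
        · exfalso
          exact (h2 q hq p hp hqnep).2.2.2 (by rw [hq2, h])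
        · exfalso
          refine h3 p hp q hq ⟨?_, ?_, ?_⟩
          · rw [hq1, Fin.lt_def]; omega
          · rw [hq1, Fin.lt_def]; omega
          · rwa [hq2]
    · intro a ha a' ha' heq
      obtain ⟨q, hq, hq1, hq2⟩ := partnerR_spec (hexq a ha)
      obtain ⟨q', hq', hq1', hq2'⟩ := partnerR_spec (hexq a' ha')
      by_contra hne
      have hqq : q ≠ q' := by
        intro h; rw [← hq1, ← hq1', h] at hne; exact hne rfl
      exact (h2 q hq q' hq' hqq).2.2.2 (by rw [hq2, hq2', heq])
  have hopen := le_antisymm hle2 hle1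
  have hnotmem : p.2 ∉ ((Sset μ \ Aof μ M).filter
      fun x => p.1.val + 1 ≤ x.val ∧ x.val < p.2.val) := by
    intro h
    obtain ⟨_, _, h2'⟩ := mem_filter.1 h
    omega
  rw [hCeq, hAeq, Finset.card_insert_of_notMem hnotmem, hopen]
  push_cast
  ring





include h1 h2 in
lemma Aof_nonneg : ∀ t, 0 ≤ ht (Aof μ M) (Sset μ \ Aof μ M) t := by
  intro t
  suffices h : cnt (Sset μ \ Aof μ M) t ≤ cnt (Aof μ M) t by
    unfold ht
    exact sub_nonneg.2 (by exact_mod_cast h)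
  unfold cnt
  apply Finset.card_le_card_of_injOn (partnerL M)
  · intro c hc
    obtain ⟨hcC, hct⟩ := mem_filter.1 hc
    obtain ⟨_, hex⟩ := Cof_eq.1 hcC
    obtain ⟨q, hq, hq1, hq2⟩ := partnerL_spec hex
    rw [Finset.mem_coe, mem_filter]
    refine ⟨hq1 ▸ left_mem_Aof h1 h2 hq, ?_⟩
    have := (h1 q hq).1
    rw [← hq1]
    rw [hq2, Fin.lt_def] at this
    omega
  · apply partnerL_injOn h2
    intro c hc
    obtain ⟨hcC, _⟩ := mem_filter.1 hc
    exact (Cof_eq.1 hcC).2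

include h1 h2 in
lemma isBallot_Aof {s k : ℕ} (hμ : ∀ i, μ i ≤ 2) (hsum : ∑ i, μ i = 2 * s + k)
    (h4 : (Sset μ).card = 2 * M.card + k) : IsBallot s k μ (Aof μ M) := by
  have hC := card_Cof h1 h2
  have hAsub : Aof μ M ⊆ Sset μ := Finset.filter_subset _ _
  have hcards := Finset.card_sdiff_add_card_eq_card hAsub
  have hsum' : 2 * (Dset μ).card + (Sset μ).card = 2 * s + k := by
    rw [← sum_mu hμ]; exact hsum
  exact ⟨hAsub, by omega, by omega, Aof_nonneg h1 h2⟩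

include h1 h2 h3 h5 in
lemma mOf_Aof : mOf (Aof μ M) (Sset μ \ Aof μ M) = M := by
  have hd : Disjoint (Aof μ M) (Sset μ \ Aof μ M) := ballot_disjoint
  have hnn := Aof_nonneg h1 h2
  have hsub : M ⊆ mOf (Aof μ M) (Sset μ \ Aof μ M) := by
    intro p hp
    exact mem_mOf.2 ⟨left_mem_Aof h1 h2 hp, right_mem_Cof h1 hp, (h1 p hp).1,
      Aof_drop h1 h2 h3 h5 hp, fun t htl htr => Aof_interval_ge h1 h2 h3 h5 hp htl htr⟩
  have hcard : (mOf (Aof μ M) (Sset μ \ Aof μ M)).card ≤ M.card := by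
    rw [card_mOf hd hnn, card_Cof h1 h2]
  exact (Finset.eq_of_subset_of_card_le hsub hcard).symm

end PMaxioms

/-! ### from ballots to matchings : the `PlatformMatchings` axioms of `mOf` -/

section BallotSide

variable {s k : ℕ} {A : Finset (Fin N)} (hb : IsBallot s k μ A)

include hb in
lemma pm1_of_ballot :
    ∀ p ∈ mOf A (Sset μ \ A), p.1 < p.2 ∧ μ p.1 = 1 ∧ μ p.2 = 1 := by
  intro p hp
  obtain ⟨hp1, hp2, hplt, -, -⟩ := mem_mOf.1 hp
  exact ⟨hplt, mem_Sset.1 (hb.1 hp1), mem_Sset.1 (mem_sdiff.1 hp2).1⟩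

lemma pm2_of_ballot :
    ∀ p ∈ mOf A (Sset μ \ A), ∀ q ∈ mOf A (Sset μ \ A), p ≠ q →
      p.1 ≠ q.1 ∧ p.1 ≠ q.2 ∧ p.2 ≠ q.1 ∧ p.2 ≠ q.2 := by
  have hd : Disjoint A (Sset μ \ A) := ballot_disjoint
  intro p hp q hq hpq
  obtain ⟨hp1, hp2, -, -, -⟩ := mem_mOf.1 hp
  obtain ⟨hq1, hq2, -, -, -⟩ := mem_mOf.1 hq
  refine ⟨fun h => hpq (mOf_inj1 hd hp hq h), fun h => ?_, fun h => ?_,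
    fun h => hpq (mOf_inj2 hd hp hq h)⟩
  · exact Finset.disjoint_left.1 hd hp1 (h ▸ hq2)
  · exact Finset.disjoint_left.1 hd hq1 (h.symm ▸ hp2)

lemma pm3_of_ballot :
    ∀ p ∈ mOf A (Sset μ \ A), ∀ q ∈ mOf A (Sset μ \ A),
      ¬(p.1 < q.1 ∧ q.1 < p.2 ∧ p.2 < q.2) :=
  fun _ hp _ hq => mOf_noncross hp hq

include hb in
lemma pm4_of_ballot :
    (Sset μ).card = 2 * (mOf A (Sset μ \ A)).card + k := by
  obtain ⟨hsub, hcA, hcC, hnn⟩ := hb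
  rw [card_mOf ballot_disjoint hnn]
  have := Finset.card_sdiff_add_card_eq_card hsub
  omega

include hb in
lemma pm5_of_ballot :
    ∀ x : Fin N, μ x = 1 → (∀ p ∈ mOf A (Sset μ \ A), p.1 ≠ x ∧ p.2 ≠ x) →
      ∀ p ∈ mOf A (Sset μ \ A), ¬(p.1 < x ∧ x < p.2) := by
  intro x hx hum
  have hxS : x ∈ Sset μ := mem_Sset.2 hx
  have hxU : x ∈ A ∪ (Sset μ \ A) := by
    by_cases h : x ∈ A
    · exact mem_union_left _ h
    · exact mem_union_right _ (mem_sdiff.2 ⟨hxS, h⟩)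
  exact no_unmatched_inside ballot_disjoint hb.2.2.2 hxU hum

include hb in
lemma Aof_mOf : Aof μ (mOf A (Sset μ \ A)) = A := by
  have hd : Disjoint A (Sset μ \ A) := ballot_disjoint
  have hnn := hb.2.2.2
  ext x
  rw [mem_Aof]
  constructor
  · rintro ⟨hx, hall⟩
    by_contra hxA
    obtain ⟨p, hp, hpx⟩ := closer_matched hd hnn (mem_sdiff.2 ⟨mem_Sset.2 hx, hxA⟩)
    exact hall p hp hpx
  · intro hxA
    refine ⟨mem_Sset.1 (hb.1 hxA), fun p hp h => ?_⟩
    obtain ⟨-, hp2, -, -, -⟩ := mem_mOf.1 hp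
    exact Finset.disjoint_left.1 hd hxA (h ▸ hp2)

end BallotSide

/-- The equivalence between ballot sequences and crossingless matchings. -/
noncomputable def ballotEquivPM (N s k : ℕ) (μ : Fin N → ℕ) (hμ : ∀ i, μ i ≤ 2)
    (hsum : ∑ i, μ i = 2 * s + k) :
    {A : Finset (Fin N) // IsBallot s k μ A} ≃ PlatformMatchings N k μ where
  toFun A := ⟨mOf A.1 (Sset μ \ A.1), pm1_of_ballot A.2, pm2_of_ballot,
    pm3_of_ballot, pm4_of_ballot A.2, pm5_of_ballot A.2⟩
  invFun M := ⟨Aof μ M.1, isBallot_Aof M.2.1 M.2.2.1 hμ hsum M.2.2.2.2.1⟩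
  left_inv A := Subtype.ext (Aof_mOf A.2)
  right_inv M := Subtype.ext (mOf_Aof M.2.1 M.2.2.1 M.2.2.2.1 M.2.2.2.2.2)



/-! ### tableaux side -/

lemma exists_orderEmbOfFin_eq {X : Finset (Fin N)} {n : ℕ} (hX : X.card = n) {v : Fin N}
    (hv : v ∈ X) : ∃ j, X.orderEmbOfFin hX j = v :=
  ⟨(X.orderIsoOfFin hX).symm ⟨v, hv⟩, by
    rw [← Finset.coe_orderIsoOfFin_apply, OrderIso.apply_symm_apply]⟩

lemma count_orderEmbOfFin (X : Finset (Fin N)) {n : ℕ} (hX : X.card = n) (v : Fin N) :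
    (univ.filter fun j : Fin n => X.orderEmbOfFin hX j = v).card
      = if v ∈ X then 1 else 0 := by
  split_ifs with h
  · have he : (univ.filter fun j : Fin n => X.orderEmbOfFin hX j = v)
        = {(X.orderIsoOfFin hX).symm ⟨v, h⟩} := by
      ext j
      simp only [mem_filter, mem_univ, true_and, mem_singleton]
      constructor
      · intro hj
        have : (X.orderIsoOfFin hX) j = ⟨v, h⟩ := Subtype.ext (by
          rw [Finset.coe_orderIsoOfFin_apply]; exact hj)
        rw [← this, OrderIso.symm_apply_apply]
      · rintro rfl
        rw [← Finset.coe_orderIsoOfFin_apply, OrderIso.apply_symm_apply]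
    rw [he, card_singleton]
  · rw [Finset.card_eq_zero, Finset.filter_eq_empty_iff]
    intro j _
    intro hj
    exact h (hj ▸ Finset.orderEmbOfFin_mem X hX j)

lemma cnt_union_disjoint {X Y : Finset (Fin N)} (h : Disjoint X Y) (t : ℕ) :
    cnt (X ∪ Y) t = cnt X t + cnt Y t := by
  unfold cnt
  rw [Finset.filter_union, card_union_of_disjoint]
  exact Finset.disjoint_filter_filter h

lemma rowwise_of_prefix {n m : ℕ} {U W : Finset (Fin N)} (hU : U.card = n) (hW : W.card = m)
    (hmn : m ≤ n) (hpre : ∀ t, cnt W t ≤ cnt U t) (i : Fin m) :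
    U.orderEmbOfFin hU (Fin.castLE hmn i) ≤ W.orderEmbOfFin hW i := by
  set w := W.orderEmbOfFin hW i with hw
  have h1 : i.val + 1 ≤ cnt W (w.val + 1) := by
    have hsub : (Finset.Iic i).image (W.orderEmbOfFin hW)
        ⊆ W.filter fun x => x.val < w.val + 1 := by
      intro x hx
      obtain ⟨j, hj, rfl⟩ := mem_image.1 hx
      rw [mem_filter]
      refine ⟨Finset.orderEmbOfFin_mem W hW j, ?_⟩
      have hle : W.orderEmbOfFin hW j ≤ w := (W.orderEmbOfFin hW).monotone (mem_Iic.1 hj)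
      rw [Fin.le_def] at hle
      omega
    calc i.val + 1 = (Finset.Iic i).card := (Fin.card_Iic i).symm
      _ = ((Finset.Iic i).image (W.orderEmbOfFin hW)).card :=
          (Finset.card_image_of_injective _ (W.orderEmbOfFin hW).injective).symm
      _ ≤ cnt W (w.val + 1) := Finset.card_le_card hsub
  by_contra hlt
  push_neg at hlt
  have hsub2 : (U.filter fun x => x.val < w.val + 1)
      ⊆ (Finset.Iio (Fin.castLE hmn i)).image (U.orderEmbOfFin hU) := by
    intro x hx
    obtain ⟨hxU, hxw⟩ := mem_filter.1 hx
    obtain ⟨j, hj⟩ := exists_orderEmbOfFin_eq hU hxU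
    rw [mem_image]
    refine ⟨j, mem_Iio.2 ?_, hj⟩
    have hxle : x ≤ w := by rw [Fin.le_def]; omega
    have hlt2 : U.orderEmbOfFin hU j < U.orderEmbOfFin hU (Fin.castLE hmn i) := by
      rw [hj]; exact lt_of_le_of_lt hxle hlt
    exact (U.orderEmbOfFin hU).lt_iff_lt.1 hlt2
  have h3 : cnt U (w.val + 1) ≤ i.val := by
    calc cnt U (w.val + 1) ≤ ((Finset.Iio (Fin.castLE hmn i)).image (U.orderEmbOfFin hU)).card :=
          Finset.card_le_card hsub2
      _ = (Finset.Iio (Fin.castLE hmn i)).card :=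
          Finset.card_image_of_injective _ (U.orderEmbOfFin hU).injective
      _ = i.val := Fin.card_Iio (Fin.castLE hmn i)
  have := hpre (w.val + 1)
  omega

lemma prefix_of_rowwise {n m : ℕ} (hmn : m ≤ n) (f : Fin n → Fin N) (g : Fin m → Fin N)
    (hf : StrictMono f) (hg : StrictMono g)
    (hrow : ∀ i : Fin m, f (Fin.castLE hmn i) ≤ g i) (t : ℕ) :
    cnt (univ.image g) t ≤ cnt (univ.image f) t := by
  unfold cnt
  have e2 : ((univ.image g).filter fun x => x.val < t)
      = (univ.filter fun j : Fin m => (g j).val < t).image g := by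
    ext x
    simp only [mem_filter, mem_image, mem_univ, true_and]
    constructor
    · rintro ⟨⟨j, rfl⟩, hx⟩
      exact ⟨j, hx, rfl⟩
    · rintro ⟨j, hj, rfl⟩
      exact ⟨⟨j, rfl⟩, hj⟩
  have e1 : ((univ.image f).filter fun x => x.val < t)
      = (univ.filter fun j : Fin n => (f j).val < t).image f := by
    ext x
    simp only [mem_filter, mem_image, mem_univ, true_and]
    constructor
    · rintro ⟨⟨j, rfl⟩, hx⟩
      exact ⟨j, hx, rfl⟩
    · rintro ⟨j, hj, rfl⟩
      exact ⟨⟨j, rfl⟩, hj⟩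
  rw [e1, e2, Finset.card_image_of_injective _ hg.injective,
    Finset.card_image_of_injective _ hf.injective]
  apply Finset.card_le_card_of_injOn (fun j => Fin.castLE hmn j)
  · intro j hj
    rw [Finset.mem_coe, mem_filter] at hj ⊢
    beta_reduce
    have := hrow j
    rw [Fin.le_def] at this
    exact ⟨mem_univ _, by omega⟩
  · intro a _ b _ hab
    exact Fin.castLE_injective hmn hab

section SSYTside

variable {s k : ℕ} {T : (Fin (s + k) → Fin N) × (Fin s → Fin N)}
  (hT1 : StrictMono T.1) (hT2 : StrictMono T.2)
  (hT3 : ∀ i : Fin s, T.1 (Fin.castLE (Nat.le_add_right s k) i) ≤ T.2 i)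
  (hT4 : ∀ v : Fin N,
      (Finset.univ.filter fun j => T.1 j = v).card +
        (Finset.univ.filter fun j => T.2 j = v).card = μ v)

/-- the opener set of a tableau: content-1 values appearing in the left column -/
def AofT (μ : Fin N → ℕ) (T : (Fin (s + k) → Fin N) × (Fin s → Fin N)) : Finset (Fin N) :=
  (Sset μ).filter fun v => ∃ j, T.1 j = v

lemma mem_AofT {v : Fin N} : v ∈ AofT μ T ↔ μ v = 1 ∧ ∃ j, T.1 j = v := by
  simp [AofT, Sset]

include hT1 in
lemma c1_le_one (v : Fin N) : (Finset.univ.filter fun j => T.1 j = v).card ≤ 1 := by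
  rw [Finset.card_le_one]
  intro a ha b hb
  rw [mem_filter] at ha hb
  exact hT1.injective (ha.2.trans hb.2.symm)

include hT2 in
lemma c2_le_one (v : Fin N) : (Finset.univ.filter fun j => T.2 j = v).card ≤ 1 := by
  rw [Finset.card_le_one]
  intro a ha b hb
  rw [mem_filter] at ha hb
  exact hT2.injective (ha.2.trans hb.2.symm)

lemma c1_pos_iff {v : Fin N} :
    0 < (Finset.univ.filter fun j => T.1 j = v).card ↔ ∃ j, T.1 j = v := by
  rw [Finset.card_pos]
  constructor
  · rintro ⟨j, hj⟩
    exact ⟨j, (mem_filter.1 hj).2⟩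
  · rintro ⟨j, hj⟩
    exact ⟨j, mem_filter.2 ⟨mem_univ _, hj⟩⟩

lemma c2_pos_iff {v : Fin N} :
    0 < (Finset.univ.filter fun j => T.2 j = v).card ↔ ∃ j, T.2 j = v := by
  rw [Finset.card_pos]
  constructor
  · rintro ⟨j, hj⟩
    exact ⟨j, (mem_filter.1 hj).2⟩
  · rintro ⟨j, hj⟩
    exact ⟨j, mem_filter.2 ⟨mem_univ _, hj⟩⟩

include hT1 hT2 hT4 in
lemma image_col1 (hμ : ∀ i, μ i ≤ 2) : univ.image T.1 = Dset μ ∪ AofT μ T := by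
  ext v
  rw [mem_union, mem_Dset, mem_AofT]
  simp only [mem_image, mem_univ, true_and]
  have h4 := hT4 v
  have hc1 := c1_le_one hT1 v
  have hc2 := c2_le_one hT2 v
  have hpos := c1_pos_iff (T := T) (v := v)
  constructor
  · rintro ⟨j, hj⟩
    have h1 : 0 < (Finset.univ.filter fun j => T.1 j = v).card := hpos.2 ⟨j, hj⟩
    rcases Nat.lt_or_ge (μ v) 2 with h | h
    · exact Or.inr ⟨by omega, j, hj⟩
    · exact Or.inl (by have := hμ v; omega)
  · rintro (h | ⟨-, j, hj⟩)
    · exact hpos.1 (by omega)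
    · exact ⟨j, hj⟩

include hT1 hT2 hT4 in
lemma image_col2 (hμ : ∀ i, μ i ≤ 2) :
    univ.image T.2 = Dset μ ∪ (Sset μ \ AofT μ T) := by
  ext v
  rw [mem_union, mem_Dset, mem_sdiff, mem_Sset, mem_AofT]
  simp only [mem_image, mem_univ, true_and]
  have h4 := hT4 v
  have hc1 := c1_le_one hT1 v
  have hc2 := c2_le_one hT2 v
  have hpos1 := c1_pos_iff (T := T) (v := v)
  have hpos2 := c2_pos_iff (T := T) (v := v)
  constructor
  · rintro ⟨j, hj⟩
    have h2 : 0 < (Finset.univ.filter fun j => T.2 j = v).card := hpos2.2 ⟨j, hj⟩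
    rcases Nat.lt_or_ge (μ v) 2 with h | h
    · refine Or.inr ⟨by omega, ?_⟩
      rintro ⟨-, j', hj'⟩
      have := hpos1.2 ⟨j', hj'⟩
      omega
    · exact Or.inl (by have := hμ v; omega)
  · rintro (h | ⟨h, hnot⟩)
    · exact hpos2.1 (by omega)
    · have h1 : (Finset.univ.filter fun j => T.1 j = v).card = 0 := by
        by_contra hne
        exact hnot ⟨h, hpos1.1 (by omega)⟩
      exact hpos2.1 (by omega)

lemma Dset_disj_left : Disjoint (Dset μ) (AofT μ T) := by
  rw [Finset.disjoint_left]
  intro a ha hb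
  rw [mem_Dset] at ha
  rw [mem_AofT] at hb
  omega

lemma Dset_disj_right {A : Finset (Fin N)} : Disjoint (Dset μ) (Sset μ \ A) := by
  rw [Finset.disjoint_left]
  intro a ha hb
  rw [mem_Dset] at ha
  have := mem_Sset.1 (mem_sdiff.1 hb).1
  omega

include hT1 hT2 hT3 hT4 in
lemma isBallot_AofT (hμ : ∀ i, μ i ≤ 2) : IsBallot s k μ (AofT μ T) := by
  have hi1 := image_col1 hT1 hT2 hT4 hμ
  have hi2 := image_col2 hT1 hT2 hT4 hμ
  have hcard1 : (Dset μ).card + (AofT μ T).card = s + k := by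
    rw [← card_union_of_disjoint (Dset_disj_left (T := T)), ← hi1,
      Finset.card_image_of_injective _ hT1.injective]
    simp
  have hcard2 : (Dset μ).card + (Sset μ \ AofT μ T).card = s := by
    rw [← card_union_of_disjoint (Dset_disj_right (A := AofT μ T)), ← hi2,
      Finset.card_image_of_injective _ hT2.injective]
    simp
  refine ⟨Finset.filter_subset _ _, hcard1, hcard2, fun t => ?_⟩
  have hpre := prefix_of_rowwise (Nat.le_add_right s k) T.1 T.2 hT1 hT2 hT3 t
  rw [hi1, hi2, cnt_union_disjoint (Dset_disj_left (T := T)) t,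
    cnt_union_disjoint (Dset_disj_right (A := AofT μ T)) t] at hpre
  unfold ht
  have : cnt (Sset μ \ AofT μ T) t ≤ cnt (AofT μ T) t := by omega
  exact sub_nonneg.2 (by exact_mod_cast this)

end SSYTside

section BallotToSSYT

variable {s k : ℕ} {A : Finset (Fin N)}

lemma ballot_card1 (hb : IsBallot s k μ A) : (Dset μ ∪ A).card = s + k := by
  have hd : Disjoint (Dset μ) A := by
    rw [Finset.disjoint_left]
    intro a ha hb'
    rw [mem_Dset] at ha
    have := mem_Sset.1 (hb.1 hb')
    omega
  rw [card_union_of_disjoint hd]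
  exact hb.2.1

lemma ballot_card2 (hb : IsBallot s k μ A) : (Dset μ ∪ (Sset μ \ A)).card = s := by
  rw [card_union_of_disjoint (Dset_disj_right (A := A))]
  exact hb.2.2.1

/-- left column of the tableau associated with a ballot sequence -/
noncomputable def col1 (hb : IsBallot s k μ A) : Fin (s + k) → Fin N :=
  fun j => (Dset μ ∪ A).orderEmbOfFin (ballot_card1 hb) j

noncomputable def col2 (hb : IsBallot s k μ A) : Fin s → Fin N :=
  fun j => (Dset μ ∪ (Sset μ \ A)).orderEmbOfFin (ballot_card2 hb) j

lemma col_prefix (hb : IsBallot s k μ A) (t : ℕ) :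
    cnt (Dset μ ∪ (Sset μ \ A)) t ≤ cnt (Dset μ ∪ A) t := by
  have hd : Disjoint (Dset μ) A := by
    rw [Finset.disjoint_left]
    intro a ha hb'
    rw [mem_Dset] at ha
    have := mem_Sset.1 (hb.1 hb')
    omega
  rw [cnt_union_disjoint hd t, cnt_union_disjoint (Dset_disj_right (A := A)) t]
  have := hb.2.2.2 t
  unfold ht at this
  have h2 : cnt (Sset μ \ A) t ≤ cnt A t := by exact_mod_cast sub_nonneg.1 this
  omega

lemma col_strictMono1 (hb : IsBallot s k μ A) : StrictMono (col1 hb) :=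
  ((Dset μ ∪ A).orderEmbOfFin (ballot_card1 hb)).strictMono

lemma col_strictMono2 (hb : IsBallot s k μ A) : StrictMono (col2 hb) :=
  ((Dset μ ∪ (Sset μ \ A)).orderEmbOfFin (ballot_card2 hb)).strictMono

lemma col_rowwise (hb : IsBallot s k μ A) (i : Fin s) :
    col1 hb (Fin.castLE (Nat.le_add_right s k) i) ≤ col2 hb i :=
  rowwise_of_prefix (ballot_card1 hb) (ballot_card2 hb) (Nat.le_add_right s k)
    (col_prefix hb) i

lemma col_content (hb : IsBallot s k μ A) (hμ : ∀ i, μ i ≤ 2) (v : Fin N) :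
    (Finset.univ.filter fun j => col1 hb j = v).card +
      (Finset.univ.filter fun j => col2 hb j = v).card = μ v := by
  unfold col1 col2
  rw [count_orderEmbOfFin, count_orderEmbOfFin]
  have hAS := hb.1
  by_cases h2 : μ v = 2
  · rw [if_pos (mem_union_left _ (mem_Dset.2 h2)),
      if_pos (mem_union_left _ (mem_Dset.2 h2))]
    omega
  · by_cases h1 : μ v = 1
    · have hvD : v ∉ Dset μ := by rw [mem_Dset]; omega
      by_cases hA : v ∈ A
      · rw [if_pos (mem_union_right _ hA), if_neg, ]
        · omega
        · rw [mem_union, mem_sdiff]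
          rintro (h | ⟨-, h⟩)
          · exact hvD h
          · exact h hA
      · rw [if_neg, if_pos (mem_union_right _ (mem_sdiff.2 ⟨mem_Sset.2 h1, hA⟩))]
        · omega
        · rw [mem_union]
          rintro (h | h)
          · exact hvD h
          · exact hA h
    · have h0 : μ v = 0 := by have := hμ v; omega
      rw [if_neg, if_neg]
      · omega
      · rw [mem_union, mem_Dset, mem_sdiff, mem_Sset]
        rintro (h | ⟨h, -⟩) <;> omega
      · rw [mem_union, mem_Dset]
        rintro (h | h)
        · omega
        · have := mem_Sset.1 (hAS h)
          omega

lemma AofT_col (hb : IsBallot s k μ A) :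
    AofT μ ((col1 hb, col2 hb) : (Fin (s + k) → Fin N) × (Fin s → Fin N)) = A := by
  ext v
  rw [mem_AofT]
  constructor
  · rintro ⟨hv1, j, hj⟩
    have hvm : v ∈ Dset μ ∪ A := by
      rw [← hj]
      exact Finset.orderEmbOfFin_mem _ _ _
    rcases mem_union.1 hvm with h | h
    · rw [mem_Dset] at h; omega
    · exact h
  · intro hvA
    refine ⟨mem_Sset.1 (hb.1 hvA), ?_⟩
    exact exists_orderEmbOfFin_eq (ballot_card1 hb) (mem_union_right _ hvA)

/-- The equivalence between tableaux and ballot sequences. -/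
noncomputable def ssytEquivBallot (N s k : ℕ) (μ : Fin N → ℕ) (hμ : ∀ i, μ i ≤ 2) :
    SSYT N s k μ ≃ {A : Finset (Fin N) // IsBallot s k μ A} where
  toFun T := ⟨AofT μ T.1, isBallot_AofT T.2.1 T.2.2.1 T.2.2.2.1 T.2.2.2.2 hμ⟩
  invFun A := ⟨(col1 A.2, col2 A.2), col_strictMono1 A.2, col_strictMono2 A.2,
    col_rowwise A.2, col_content A.2 hμ⟩
  left_inv T := by
    obtain ⟨⟨T1, T2⟩, hT1, hT2, hT3, hT4⟩ := T
    apply Subtype.ext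
    have hb := isBallot_AofT (T := (T1, T2)) hT1 hT2 hT3 hT4 hμ
    have e1 : T1 = (Dset μ ∪ AofT μ (T1, T2)).orderEmbOfFin (ballot_card1 hb) := by
      apply Finset.orderEmbOfFin_unique
      · intro x
        have : T1 x ∈ univ.image T1 := mem_image_of_mem _ (mem_univ x)
        rw [image_col1 (T := (T1, T2)) hT1 hT2 hT4 hμ] at this
        exact this
      · exact hT1
    have e2 : T2 = (Dset μ ∪ (Sset μ \ AofT μ (T1, T2))).orderEmbOfFin
        (ballot_card2 hb) := by
      apply Finset.orderEmbOfFin_unique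
      · intro x
        have : T2 x ∈ univ.image T2 := mem_image_of_mem _ (mem_univ x)
        rw [image_col2 (T := (T1, T2)) hT1 hT2 hT4 hμ] at this
        exact this
      · exact hT2
    exact Prod.ext e1.symm e2.symm
  right_inv A := Subtype.ext (AofT_col A.2)

end BallotToSSYT

end Stmt16Aux

/-- For an admissible weight `μ` (entries in `{0,1,2}`, total `2s+k`, and
dominance partial-sum conditions), the semi-standard tableaux of shape
`λ = ω_s + ω_{s+k}` and content `μ` are in explicit bijection with the
crossingless matchings of the `m(μ)` points `{i : μ i = 1}` with one platform
of `k` points; in particular the two sets have the same cardinality. -/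
theorem stmt16 (N s k : ℕ) (μ : Fin N → ℕ) (hμ : ∀ i, μ i ≤ 2)
    (hsum : ∑ i, μ i = 2 * s + k)
    (hdom : ∀ t : ℕ,
      ∑ i ∈ Finset.univ.filter (fun i : Fin N => (i : ℕ) < t), μ i ≤
        min t s + min t (s + k)) :
    Nonempty (SSYT N s k μ ≃ PlatformMatchings N k μ) ∧
      Nat.card (SSYT N s k μ) = Nat.card (PlatformMatchings N k μ) := by
  have e := (Stmt16Aux.ssytEquivBallot N s k μ hμ).trans
    (Stmt16Aux.ballotEquivPM N s k μ hμ hsum)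
  exact ⟨⟨e⟩, Nat.card_congr e⟩
end
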